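/- arXiv:0806.2403 — 4 statements merged into one kernel-verified Lean document; each statement's English description precedes it below -/
import Mathlib

section
/- Let h₆(x,y,ε) = y²/2 + (a/3)x³ − bεx with a ≠ 0, and let p ≥ 6 be an integer. For every quasi-homogeneous real polynomial h of order p+1 in (x,y,ε) there exist a quasi-homogeneous polynomial χ of order p and a quasi-homogeneous polynomial u of order p+1 depending only on (x,ε) (containing no y) such that h + {h₆, χ} = u, where {·,·} is the Poisson bracket. Moreover, if p is even one can choose χ so that u = 0. -/
open MvPolynomial

/-- Poisson bracket `{f,g} = f_x g_y − f_y g_x` of polynomials in `(x,y,ε)`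
(variables `0, 1, 2` of `MvPolynomial (Fin 3) ℝ`). -/
noncomputable def pbracket (f g : MvPolynomial (Fin 3) ℝ) : MvPolynomial (Fin 3) ℝ :=
  pderiv 0 f * pderiv 1 g - pderiv 1 f * pderiv 0 g

/-- Quasi-homogeneous weights: `x` has weight 2, `y` weight 3, `ε` weight 4. -/
def qhw : Fin 3 → ℕ := ![2, 3, 4]

namespace Stmt5Aux

lemma ne01 : (0 : Fin 3) ≠ 1 := by decide
lemma ne21 : (2 : Fin 3) ≠ 1 := by decide
lemma ne10 : (1 : Fin 3) ≠ 0 := by decide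
lemma ne20 : (2 : Fin 3) ≠ 0 := by decide

lemma natC (n : ℕ) : ((n:ℕ) : MvPolynomial (Fin 3) ℝ) = C (n:ℝ) := (map_natCast C _).symm

lemma weight_fin3 (m : Fin 3 →₀ ℕ) : Finsupp.weight qhw m = 2 * m 0 + 3 * m 1 + 4 * m 2 := by
  rw [Finsupp.weight_apply, Finsupp.sum_fintype _ _ (by simp)]
  simp [Fin.sum_univ_three, qhw]; ring

lemma wh_pow (k : Fin 3) (n : ℕ) :
    IsWeightedHomogeneous qhw ((X k : MvPolynomial (Fin 3) ℝ) ^ n) (qhw k * n) := by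
  rw [X_pow_eq_monomial]
  apply isWeightedHomogeneous_monomial
  simp [Finsupp.weight_apply, Finsupp.sum_single_index, mul_comm]

lemma wh_mono (i j l : ℕ) (c : ℝ) :
    IsWeightedHomogeneous qhw (C c * X 0 ^ i * X 1 ^ j * X 2 ^ l : MvPolynomial (Fin 3) ℝ)
      (2*i+3*j+4*l) := by
  have := (((isWeightedHomogeneous_C qhw c).mul (wh_pow 0 i)).mul (wh_pow 1 j)).mul (wh_pow 2 l)
  convert this using 2 <;> simp [qhw]

lemma pd0_h₆ (a b : ℝ) :
    pderiv 0 (C ((1:ℝ)/2) * X 1 ^ 2 + C (a/3) * X 0 ^ 3 - C b * X 2 * X 0 : MvPolynomial (Fin 3) ℝ)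
      = C a * X 0 ^ 2 - C b * X 2 := by
  simp [pderiv_mul, pderiv_pow, pderiv_C, pderiv_X_self, pderiv_X_of_ne ne10, pderiv_X_of_ne ne20]
  rw [show (3 : MvPolynomial (Fin 3) ℝ) = C 3 from (map_ofNat C _).symm, ← mul_assoc, ← C_mul]
  norm_num

lemma pd1_h₆ (a b : ℝ) :
    pderiv 1 (C ((1:ℝ)/2) * X 1 ^ 2 + C (a/3) * X 0 ^ 3 - C b * X 2 * X 0 : MvPolynomial (Fin 3) ℝ)
      = X 1 := by
  simp [pderiv_mul, pderiv_pow, pderiv_C, pderiv_X_self, pderiv_X_of_ne ne01, pderiv_X_of_ne ne21]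
  rw [show (2 : MvPolynomial (Fin 3) ℝ) = C 2 from (map_ofNat C _).symm, ← mul_assoc, ← C_mul]
  norm_num

lemma pd0_mono (c : ℝ) (i j l : ℕ) :
    pderiv 0 (C c * X 0 ^ (i+1) * X 1 ^ j * X 2 ^ l : MvPolynomial (Fin 3) ℝ)
      = C (c*(i+1)) * X 0 ^ i * X 1 ^ j * X 2 ^ l := by
  simp only [pderiv_mul, pderiv_pow, pderiv_C, pderiv_X_self, pderiv_X_of_ne ne10,
    pderiv_X_of_ne ne20, mul_zero, zero_mul, add_zero, zero_add, mul_one, Nat.add_sub_cancel]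
  rw [natC, show (c * ((i:ℝ) + 1) : ℝ) = c * (((i+1:ℕ):ℕ):ℝ) from by push_cast; ring, C_mul]
  ring

lemma pd1_mono (c : ℝ) (i j l : ℕ) :
    pderiv 1 (C c * X 0 ^ i * X 1 ^ (j+1) * X 2 ^ l : MvPolynomial (Fin 3) ℝ)
      = C (c*(j+1)) * X 0 ^ i * X 1 ^ j * X 2 ^ l := by
  simp only [pderiv_mul, pderiv_pow, pderiv_C, pderiv_X_self, pderiv_X_of_ne ne01,
    pderiv_X_of_ne ne21, mul_zero, zero_mul, add_zero, zero_add, mul_one, Nat.add_sub_cancel]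
  rw [natC, show (c * ((j:ℝ) + 1) : ℝ) = c * (((j+1:ℕ):ℕ):ℝ) from by push_cast; ring, C_mul]
  ring

lemma pd1_mono0 (c : ℝ) (i l : ℕ) :
    pderiv 1 (C c * X 0 ^ i * X 1 ^ 0 * X 2 ^ l : MvPolynomial (Fin 3) ℝ) = 0 := by
  simp [pderiv_mul, pderiv_pow, pderiv_C, pderiv_X_self, pderiv_X_of_ne ne01, pderiv_X_of_ne ne21]

lemma pb_add (f g g' : MvPolynomial (Fin 3) ℝ) :
    pbracket f (g + g') = pbracket f g + pbracket f g' := by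
  simp only [pbracket, map_add]; ring

lemma pb_zero (f : MvPolynomial (Fin 3) ℝ) : pbracket f 0 = 0 := by
  simp [pbracket]

lemma pb_explicit (a b : ℝ) (χ : MvPolynomial (Fin 3) ℝ) :
    pbracket (C ((1:ℝ)/2) * X 1 ^ 2 + C (a/3) * X 0 ^ 3 - C b * X 2 * X 0) χ
      = (C a * X 0 ^ 2 - C b * X 2) * pderiv 1 χ - X 1 * pderiv 0 χ := by
  rw [pbracket, pd0_h₆, pd1_h₆]

lemma mono_eq (m : Fin 3 →₀ ℕ) (c : ℝ) :
    (monomial m c : MvPolynomial (Fin 3) ℝ) = C c * X 0 ^ m 0 * X 1 ^ m 1 * X 2 ^ m 2 := by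
  rw [monomial_eq, Finsupp.prod_fintype _ _ (fun i => pow_zero _)]
  rw [Fin.prod_univ_three]
  ring

lemma noY_mono (c : ℝ) (i l : ℕ) :
    ∀ m ∈ (C c * X 0 ^ i * X 2 ^ l : MvPolynomial (Fin 3) ℝ).support, m 1 = 0 := by
  have h : (C c * X 0 ^ i * X 2 ^ l : MvPolynomial (Fin 3) ℝ)
      = monomial (Finsupp.single 0 i + Finsupp.single 2 l) c := by
    rw [mono_eq]
    simp [Finsupp.single_apply]
  intro m hm
  rw [h] at hm
  have := support_monomial_subset hm
  simp only [Finset.mem_singleton] at this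
  subst this
  simp [Finsupp.single_apply]

lemma noY_pderiv (u : MvPolynomial (Fin 3) ℝ) (hu : ∀ m ∈ u.support, m 1 = 0) :
    pderiv 1 u = 0 := by
  conv_lhs => rw [u.as_sum]
  rw [map_sum]
  refine Finset.sum_eq_zero fun m hm => ?_
  rw [pderiv_monomial, hu m hm]
  simp

/-- Main inductive construction: solving the homological equation for a monomial. -/
lemma key (a b : ℝ) (p : ℕ) (j : ℕ) : ∀ i l : ℕ, ∀ c : ℝ, 2*i+3*j+4*l = p+1 →
    ∃ χ u : MvPolynomial (Fin 3) ℝ,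
      χ.IsWeightedHomogeneous qhw p ∧ u.IsWeightedHomogeneous qhw (p + 1) ∧
      (∀ m ∈ u.support, m 1 = 0) ∧
      (C c * X 0 ^ i * X 1 ^ j * X 2 ^ l : MvPolynomial (Fin 3) ℝ)
        + pbracket (C ((1:ℝ)/2) * X 1 ^ 2 + C (a/3) * X 0 ^ 3 - C b * X 2 * X 0) χ = u := by
  induction j using Nat.strong_induction_on with
  | _ j IH =>
  intro i l c hw
  rcases j with _ | j'
  · -- j = 0 : already y-free
    refine ⟨0, C c * X 0 ^ i * X 2 ^ l, isWeightedHomogeneous_zero _ _ _, ?_, noY_mono c i l, ?_⟩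
    · have h2 : (C c * X 0 ^ i * X 2 ^ l : MvPolynomial (Fin 3) ℝ)
          = C c * X 0 ^ i * X 1 ^ 0 * X 2 ^ l := by ring
      rw [h2, ← hw]
      exact wh_mono i 0 l c
    · rw [pb_zero, add_zero]; ring
  · -- j = j' + 1 : use χ₀ = (c/(i+1)) x^{i+1} y^{j'} ε^l
    set c' : ℝ := c / (i+1) with hc'
    have hic : ((i:ℝ) + 1) ≠ 0 := by positivity
    have hc : c = c' * ((i:ℝ)+1) := by rw [hc', div_mul_cancel₀ _ hic]
    set χ₀ : MvPolynomial (Fin 3) ℝ := C c' * X 0 ^ (i+1) * X 1 ^ j' * X 2 ^ l with hχ₀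
    have hχ₀h : χ₀.IsWeightedHomogeneous qhw p := by
      have : 2*(i+1)+3*j'+4*l = p := by omega
      rw [hχ₀, ← this]; exact wh_mono (i+1) j' l c'
    rcases j' with _ | j''
    · -- j = 1 : everything cancels
      refine ⟨χ₀, 0, hχ₀h, isWeightedHomogeneous_zero _ _ _, by simp, ?_⟩
      rw [pb_explicit, hχ₀, pd1_mono0, pd0_mono, hc]
      ring
    · -- j = j'' + 2
      have e0 : (C c * X 0 ^ i * X 1 ^ (j''+2) * X 2 ^ l : MvPolynomial (Fin 3) ℝ)
          + pbracket (C ((1:ℝ)/2) * X 1 ^ 2 + C (a/3) * X 0 ^ 3 - C b * X 2 * X 0) χ₀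
          = C (a*(c'*((j'':ℝ)+1))) * X 0 ^ (i+3) * X 1 ^ j'' * X 2 ^ l
            + C (-(b*(c'*((j'':ℝ)+1)))) * X 0 ^ (i+1) * X 1 ^ j'' * X 2 ^ (l+1) := by
        rw [pb_explicit, hχ₀, pd1_mono, pd0_mono, hc]
        simp only [C_mul, map_neg, C_add, map_one]
        push_cast
        ring
      obtain ⟨χ₁, u₁, hχ₁, hu₁, hy₁, e₁⟩ :=
        IH j'' (by omega) (i+3) l (a*(c'*((j'':ℝ)+1))) (by omega)
      obtain ⟨χ₂, u₂, hχ₂, hu₂, hy₂, e₂⟩ :=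
        IH j'' (by omega) (i+1) (l+1) (-(b*(c'*((j'':ℝ)+1)))) (by omega)
      refine ⟨χ₀ + χ₁ + χ₂, u₁ + u₂, (hχ₀h.add hχ₁).add hχ₂, hu₁.add hu₂, ?_, ?_⟩
      · intro m hm
        rcases Finset.mem_union.mp (MvPolynomial.support_add hm) with h | h
        · exact hy₁ m h
        · exact hy₂ m h
      · rw [pb_add, pb_add]
        calc C c * X 0 ^ i * X 1 ^ (j''+2) * X 2 ^ l
              + (pbracket _ χ₀ + pbracket _ χ₁ + pbracket _ χ₂)
            = (C c * X 0 ^ i * X 1 ^ (j''+2) * X 2 ^ l + pbracket _ χ₀)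
              + pbracket _ χ₁ + pbracket _ χ₂ := by ring
          _ = (C (a*(c'*((j'':ℝ)+1))) * X 0 ^ (i+3) * X 1 ^ j'' * X 2 ^ l + pbracket _ χ₁)
              + (C (-(b*(c'*((j'':ℝ)+1)))) * X 0 ^ (i+1) * X 1 ^ j'' * X 2 ^ (l+1)
                + pbracket _ χ₂) := by rw [e0]; ring
          _ = u₁ + u₂ := by rw [e₁, e₂]

end Stmt5Aux

open Stmt5Aux

/-- Normal-form homological step: for `h₆ = y²/2 + (a/3)x³ − bεx` with `a ≠ 0` and any
quasi-homogeneous polynomial `h` of order `p+1` (`p ≥ 6`) there are quasi-homogeneous `χ`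
of order `p` and `u` of order `p+1` free of `y` with `h + {h₆,χ} = u`; for even `p` one
can achieve `u = 0`. -/
theorem stmt_5 (a b : ℝ) (ha : a ≠ 0) (p : ℕ) (hp : 6 ≤ p)
    (h₆ : MvPolynomial (Fin 3) ℝ)
    (hh₆ : h₆ = C ((1:ℝ)/2) * X 1 ^ 2 + C (a/3) * X 0 ^ 3 - C b * X 2 * X 0)
    (h : MvPolynomial (Fin 3) ℝ)
    (hh : h.IsWeightedHomogeneous qhw (p + 1)) :
    (∃ χ u : MvPolynomial (Fin 3) ℝ,
      χ.IsWeightedHomogeneous qhw p ∧ u.IsWeightedHomogeneous qhw (p + 1) ∧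
      pderiv 1 u = 0 ∧ h + pbracket h₆ χ = u) ∧
    (Even p → ∃ χ : MvPolynomial (Fin 3) ℝ,
      χ.IsWeightedHomogeneous qhw p ∧ h + pbracket h₆ χ = 0) := by
  subst hh₆
  set H : MvPolynomial (Fin 3) ℝ :=
    C ((1:ℝ)/2) * X 1 ^ 2 + C (a/3) * X 0 ^ 3 - C b * X 2 * X 0 with hH
  set Q : MvPolynomial (Fin 3) ℝ → Prop := fun g =>
    ∃ χ u : MvPolynomial (Fin 3) ℝ,
      χ.IsWeightedHomogeneous qhw p ∧ u.IsWeightedHomogeneous qhw (p + 1) ∧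
      (∀ m ∈ u.support, m 1 = 0) ∧ g + pbracket H χ = u with hQ
  have hQ0 : Q 0 := ⟨0, 0, isWeightedHomogeneous_zero _ _ _, isWeightedHomogeneous_zero _ _ _,
    by simp, by simp [pb_zero]⟩
  have hQadd : ∀ g₁ g₂, Q g₁ → Q g₂ → Q (g₁ + g₂) := by
    rintro g₁ g₂ ⟨χ₁, u₁, hχ₁, hu₁, hy₁, e₁⟩ ⟨χ₂, u₂, hχ₂, hu₂, hy₂, e₂⟩
    refine ⟨χ₁ + χ₂, u₁ + u₂, hχ₁.add hχ₂, hu₁.add hu₂, ?_, ?_⟩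
    · intro m hm
      rcases Finset.mem_union.mp (MvPolynomial.support_add hm) with hmem | hmem
      · exact hy₁ m hmem
      · exact hy₂ m hmem
    · rw [pb_add, ← e₁, ← e₂]; ring
  have hmono : ∀ m ∈ h.support, Q (monomial m (coeff m h)) := by
    intro m hm
    have hwm := hh (mem_support_iff.mp hm)
    rw [weight_fin3] at hwm
    rw [hQ, mono_eq]
    exact key a b p (m 1) (m 0) (m 2) (coeff m h) hwm
  have hQh : Q h := by
    have := Finset.sum_induction _ Q hQadd hQ0 hmono
    rwa [← h.as_sum] at this
  obtain ⟨χ, u, hχ, hu, hy, he⟩ := hQh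
  refine ⟨⟨χ, u, hχ, hu, noY_pderiv u hy, he⟩, fun hev => ⟨χ, hχ, ?_⟩⟩
  have hu0 : u = 0 := by
    ext m
    rw [coeff_zero]
    by_contra hc
    have h1 := hu hc
    rw [weight_fin3] at h1
    have h2 : m 1 = 0 := hy m (mem_support_iff.mpr hc)
    obtain ⟨k, hk⟩ := hev
    omega
  rw [he, hu0]
end

section
/- Let f : ℂ → ℂ be holomorphic on ℂ ∖ { iπ(2k+1) : k ∈ ℤ }, meromorphic at each point iπ(2k+1), periodic with period 2πi (f(t+2πi) = f(t)), and suppose f(t) → 0 as Re t → +∞ and as Re t → −∞. Then there exist polynomials P, Q ∈ ℂ[X] with P(0) = 0 such that f(t) = P(η₀(t)) + η₁(t)·Q(η₀(t)) for all t in the domain of f, where η₀(t) = 1/cosh²(t/2) and η₁(t) = −sinh(t/2)/cosh³(t/2). Equivalently, f is a polynomial without constant term in the two base functions η₀ and η₁. -/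
/-- The base function `η₀(t) = cosh⁻²(t/2)`. -/
noncomputable def eta0 (t : ℂ) : ℂ := 1 / Complex.cosh (t / 2) ^ 2

/-- The base function `η₁(t) = η₀'(t) = −sinh(t/2)·cosh⁻³(t/2)`. -/
noncomputable def eta1 (t : ℂ) : ℂ := -Complex.sinh (t / 2) / Complex.cosh (t / 2) ^ 3

/-- The singular set `{iπ(2k+1) : k ∈ ℤ}`. -/
def polesS : Set ℂ := {t : ℂ | ∃ k : ℤ, t = (Real.pi : ℂ) * (2 * k + 1) * Complex.I}

open Complex Filter Polynomial Set Bornology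

noncomputable def TT (t : ℂ) : ℂ := (Complex.exp t - 1) / (Complex.exp t + 1)

lemma exp_half_sq (t : ℂ) : exp (t/2) * exp (t/2) = exp t := by
  rw [← Complex.exp_add]; norm_num

lemma exp_half_inv (t : ℂ) : exp (t/2) * exp (-(t/2)) = 1 := by
  rw [← Complex.exp_add]; simp

lemma two_exp_cosh (t : ℂ) : 2 * exp (t/2) * cosh (t/2) = exp t + 1 := by
  simp only [Complex.cosh]
  linear_combination exp_half_sq t + exp_half_inv t

lemma two_exp_sinh (t : ℂ) : 2 * exp (t/2) * sinh (t/2) = exp t - 1 := by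
  simp only [Complex.sinh]
  linear_combination exp_half_sq t - exp_half_inv t

lemma exp_add_one_ne (t : ℂ) (h : exp t ≠ -1) : exp t + 1 ≠ 0 := by
  intro hh; exact h (by linear_combination hh)

lemma cosh_half_ne (t : ℂ) (h : exp t ≠ -1) : cosh (t/2) ≠ 0 := by
  intro hc
  apply exp_add_one_ne t h
  rw [← two_exp_cosh t, hc]; ring

lemma eta0_eq (t : ℂ) (h : exp t ≠ -1) : eta0 t = 4 * exp t / (exp t + 1)^2 := by
  have hc := cosh_half_ne t h
  have h1 := exp_add_one_ne t h
  rw [eta0, div_eq_div_iff (pow_ne_zero 2 hc) (pow_ne_zero 2 h1)]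
  have key := two_exp_cosh t
  have key2 := exp_half_sq t
  linear_combination (-(2 * exp (t/2) * cosh (t/2) + exp t + 1)) * key + 4 * cosh (t/2)^2 * key2

lemma sinh_cosh_cross (t : ℂ) :
    sinh (t/2) * (exp t + 1) = (exp t - 1) * cosh (t/2) := by
  linear_combination (-sinh (t/2)) * two_exp_cosh t + cosh (t/2) * two_exp_sinh t

lemma eta1_eq (t : ℂ) (h : exp t ≠ -1) : eta1 t = -(TT t) * eta0 t := by
  have hc := cosh_half_ne t h
  have h1 := exp_add_one_ne t h
  rw [eta1, TT, eta0]
  field_simp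
  linear_combination (-1 : ℂ) * sinh_cosh_cross t

lemma mem_polesS_iff (t : ℂ) : t ∈ polesS ↔ exp t = -1 := by
  constructor
  · rintro ⟨k, rfl⟩
    have : (Real.pi : ℂ) * (2 * k + 1) * Complex.I = (k : ℂ) * (2 * Real.pi * Complex.I) + Real.pi * Complex.I := by
      push_cast; ring
    rw [this, Complex.exp_add, Complex.exp_int_mul_two_pi_mul_I, Complex.exp_pi_mul_I, one_mul]
  · intro h
    have h2 : exp (t - Real.pi * Complex.I) = 1 := by
      rw [Complex.exp_sub, h, Complex.exp_pi_mul_I]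
      norm_num
    obtain ⟨n, hn⟩ := Complex.exp_eq_one_iff.mp h2
    refine ⟨n, ?_⟩
    push_cast
    linear_combination hn


lemma exp_per (t : ℂ) : exp (t + 2 * Real.pi * Complex.I) = exp t := by
  rw [Complex.exp_add, Complex.exp_two_pi_mul_I, mul_one]

lemma cosh_shift (z : ℂ) : cosh (z + Real.pi * Complex.I) = -cosh z := by
  rw [Complex.cosh_add, Complex.cosh_mul_I, Complex.sinh_mul_I, Complex.cos_pi, Complex.sin_pi]
  ring

lemma sinh_shift (z : ℂ) : sinh (z + Real.pi * Complex.I) = -sinh z := by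
  rw [Complex.sinh_add, Complex.cosh_mul_I, Complex.sinh_mul_I, Complex.cos_pi, Complex.sin_pi]
  ring

lemma eta0_per (t : ℂ) : eta0 (t + 2 * Real.pi * Complex.I) = eta0 t := by
  have h : (t + 2 * Real.pi * Complex.I)/2 = t/2 + Real.pi * Complex.I := by ring
  rw [eta0, eta0, h, cosh_shift]; ring

lemma eta1_per (t : ℂ) : eta1 (t + 2 * Real.pi * Complex.I) = eta1 t := by
  have h : (t + 2 * Real.pi * Complex.I)/2 = t/2 + Real.pi * Complex.I := by ring
  rw [eta1, eta1, h, cosh_shift, sinh_shift]; ring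

lemma TT_per (t : ℂ) : TT (t + 2 * Real.pi * Complex.I) = TT t := by
  rw [TT, TT, exp_per]

lemma polesS_eq : polesS = exp ⁻¹' {-1} := by
  ext t; simpa using mem_polesS_iff t

lemma isClosed_polesS : IsClosed polesS := by
  rw [polesS_eq]; exact isClosed_singleton.preimage Complex.continuous_exp

lemma polesS_re {t : ℂ} (h : t ∈ polesS) : t.re = 0 := by
  obtain ⟨k, rfl⟩ := h
  simp [Complex.mul_re, Complex.mul_im]

lemma polesS_shift (t : ℂ) (c : ℂ) (hc : exp c = 1) :
    t + c ∈ polesS ↔ t ∈ polesS := by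
  rw [mem_polesS_iff, mem_polesS_iff, Complex.exp_add, hc, mul_one]

lemma exp_int_shift (k : ℤ) : exp (2 * Real.pi * Complex.I * k) = 1 := by
  rw [mul_comm]
  exact_mod_cast Complex.exp_int_mul_two_pi_mul_I k

lemma ev_ne_poles : ∀ᶠ t in nhdsWithin ((Real.pi : ℂ) * Complex.I) {((Real.pi : ℂ) * Complex.I)}ᶜ,
    exp t ≠ -1 := by
  have h1 : Metric.ball ((Real.pi : ℂ) * Complex.I) 1 ∈
      nhdsWithin ((Real.pi : ℂ) * Complex.I) {((Real.pi : ℂ) * Complex.I)}ᶜ :=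
    nhdsWithin_le_nhds (Metric.ball_mem_nhds _ one_pos)
  filter_upwards [h1, self_mem_nhdsWithin] with t ht hne hexp
  obtain ⟨k, rfl⟩ := (mem_polesS_iff t).mpr hexp
  have hk : k ≠ 0 := by
    rintro rfl
    apply hne
    simp only [Set.mem_compl_iff, Set.mem_singleton_iff, not_not] at *
    push_cast
    ring
  have hdist : dist ((Real.pi : ℂ) * (2 * k + 1) * Complex.I) ((Real.pi : ℂ) * Complex.I)
      = 2 * Real.pi * |(k : ℝ)| := by
    rw [Complex.dist_eq]
    have he : (Real.pi : ℂ) * (2 * k + 1) * Complex.I - (Real.pi : ℂ) * Complex.I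
        = ((2 * Real.pi * k : ℝ) : ℂ) * Complex.I := by push_cast; ring
    rw [he, norm_mul, Complex.norm_I, Complex.norm_real, Real.norm_eq_abs, mul_one, abs_mul]
    have : |2 * Real.pi| = 2 * Real.pi := abs_of_pos (by positivity)
    rw [this]
  have hk1 : (1 : ℝ) ≤ |(k : ℝ)| := by exact_mod_cast Int.one_le_abs hk
  have hmem := Metric.mem_ball.mp ht
  rw [hdist] at hmem
  nlinarith [Real.pi_gt_three]

lemma analyticAt_dslope {f : ℂ → ℂ} {x : ℂ} (hf : AnalyticAt ℂ f x) :
    AnalyticAt ℂ (dslope f x) x := by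
  obtain ⟨q, hq⟩ := hf
  exact ⟨q.fslope, hq.has_fpower_series_dslope_fslope⟩

lemma factor_of_zero {A : ℂ → ℂ} {x : ℂ} (hA : AnalyticAt ℂ A x) (h0 : A x = 0) :
    ∃ D : ℂ → ℂ, AnalyticAt ℂ D x ∧ ∀ z, A z = (z - x) * D z := by
  refine ⟨dslope A x, analyticAt_dslope hA, fun z => ?_⟩
  have h := sub_smul_dslope A x z
  rw [h0, sub_zero, smul_eq_mul] at h
  exact h.symm
noncomputable def comb (c : ℂ) (P Q : Polynomial ℂ) (t : ℂ) : ℂ :=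
  c * TT t + P.eval (eta0 t) + eta1 t * Q.eval (eta0 t)

lemma factor_of_zero' {A : ℂ → ℂ} {x : ℂ} (hA : AnalyticAt ℂ A x) (h0 : A x = 0) :
    ∃ D : ℂ → ℂ, AnalyticAt ℂ D x ∧ (∀ z, A z = (z - x) * D z) ∧ D x = deriv A x := by
  refine ⟨dslope A x, analyticAt_dslope hA, fun z => ?_, dslope_same A x⟩
  have h := sub_smul_dslope A x z
  rw [h0, sub_zero, smul_eq_mul] at h
  exact h.symm

lemma exp_pC : exp ((Real.pi : ℂ) * Complex.I) = -1 := Complex.exp_pi_mul_I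

lemma step_reduce {p : ℂ} {g b A B : ℂ → ℂ} {n : ℕ}
    (hA : AnalyticAt ℂ A p)
    (hev : ∀ᶠ t in nhdsWithin p {p}ᶜ, (t - p)^(n+1) * g t = A t)
    (hB : AnalyticAt ℂ B p) (hBne : B p ≠ 0)
    (hbB : ∀ᶠ t in nhdsWithin p {p}ᶜ, (t - p)^(n+1) * b t = B t) :
    ∃ c0 : ℂ, ∃ A2, AnalyticAt ℂ A2 p ∧
      ∀ᶠ t in nhdsWithin p {p}ᶜ, (t - p)^n * (g t - c0 * b t) = A2 t := by
  refine ⟨A p / B p, ?_⟩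
  have hsub : AnalyticAt ℂ (fun t => A t - (A p / B p) * B t) p :=
    hA.sub (analyticAt_const.mul hB)
  have h0 : A p - (A p / B p) * B p = 0 := by
    rw [div_mul_cancel₀ _ hBne, sub_self]
  obtain ⟨D2, hD2, hD2id, -⟩ := factor_of_zero' hsub h0
  refine ⟨D2, hD2, ?_⟩
  filter_upwards [hev, hbB, self_mem_nhdsWithin] with t h1 h2 ht
  have htp : t - p ≠ 0 := sub_ne_zero.mpr ht
  apply mul_left_cancel₀ htp
  have key : (t - p)^(n+1) * (g t - (A p / B p) * b t) = (t - p) * D2 t := by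
    have : (t - p)^(n+1) * (g t - (A p / B p) * b t)
        = (t - p)^(n+1) * g t - (A p / B p) * ((t - p)^(n+1) * b t) := by ring
    rw [this, h1, h2, ← hD2id t]
  calc (t - p) * ((t - p)^n * (g t - A p / B p * b t))
      = (t - p)^(n+1) * (g t - A p / B p * b t) := by ring
    _ = (t - p) * D2 t := key

lemma local_struct (f : ℂ → ℂ) (hf : MeromorphicAt f ((Real.pi : ℂ) * Complex.I)) :
    ∃ c : ℂ, ∃ P Q : Polynomial ℂ, ∃ G : ℂ → ℂ, P.eval 0 = 0 ∧
      AnalyticAt ℂ G ((Real.pi : ℂ) * Complex.I) ∧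
      ∀ᶠ t in nhdsWithin ((Real.pi : ℂ) * Complex.I) {((Real.pi : ℂ) * Complex.I)}ᶜ,
        f t = comb c P Q t + G t := by
  set p : ℂ := (Real.pi : ℂ) * Complex.I with hp
  -- the factor D with exp (z - p) - 1 = (z - p) * D z
  have hE1 : AnalyticAt ℂ (fun z => exp (z - p) - 1) p :=
    ((analyticAt_id.sub analyticAt_const).cexp).sub analyticAt_const
  have hE10 : exp (p - p) - 1 = 0 := by simp
  obtain ⟨D, hD, hDid, hD0⟩ := factor_of_zero' hE1 hE10
  have hD0' : D p = 1 := by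
    rw [hD0]
    have hfun : (fun z : ℂ => exp (z - p) - 1) = fun z : ℂ => exp z / exp p - 1 := by
      funext z; rw [Complex.exp_sub]
    rw [hfun]
    have h3 : HasDerivAt (fun z : ℂ => exp z / exp p - 1) (exp p / exp p) p :=
      ((Complex.hasDerivAt_exp p).div_const (exp p)).sub_const 1
    rw [h3.deriv, div_self (Complex.exp_ne_zero p)]
  have hDne : D p ≠ 0 := by rw [hD0']; exact one_ne_zero
  -- auxiliary analytic functions
  set H0 : ℂ → ℂ := fun t => -4 * exp (t - p) / (D t)^2 with hH0def
  set T1 : ℂ → ℂ := fun t => -(exp t - 1) / D t with hT1def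
  have hH0 : AnalyticAt ℂ H0 p :=
    (analyticAt_const.mul ((analyticAt_id.sub analyticAt_const).cexp)).div
      (hD.pow 2) (by simp [hD0'])
  have hT1 : AnalyticAt ℂ T1 p :=
    ((analyticAt_id.cexp.sub analyticAt_const).neg).div hD (by simp [hD0'])
  have hH0p : H0 p = -4 := by simp [hH0def, hD0']
  have hT1p : T1 p = 2 := by
    simp only [hT1def, hD0', div_one]
    rw [exp_pC]
    ring
  -- eventual facts
  have evD : ∀ᶠ t in nhdsWithin p {p}ᶜ, D t ≠ 0 :=
    nhdsWithin_le_nhds (hD.continuousAt.eventually_ne hDne)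
  have evP : ∀ᶠ t in nhdsWithin p {p}ᶜ, exp t ≠ -1 := ev_ne_poles
  -- key pointwise eventual identities
  have hexpt : ∀ t : ℂ, exp t = -exp (t - p) := by
    intro t
    have : exp t = exp (t - p) * exp p := by rw [← Complex.exp_add]; ring_nf
    rw [this, exp_pC]; ring
  have hsum : ∀ t : ℂ, exp t + 1 = -((t - p) * D t) := by
    intro t
    rw [← hDid t, hexpt t]; ring
  have hA0 : ∀ᶠ t in nhdsWithin p {p}ᶜ, (t - p)^2 * eta0 t = H0 t := by
    filter_upwards [evD, evP, self_mem_nhdsWithin] with t hDt hPt ht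
    have htp : t - p ≠ 0 := sub_ne_zero.mpr ht
    rw [eta0_eq t hPt, hsum t, hexpt t, hH0def]
    field_simp
  have hA1 : ∀ᶠ t in nhdsWithin p {p}ᶜ, (t - p) * TT t = T1 t := by
    filter_upwards [evD, evP, self_mem_nhdsWithin] with t hDt hPt ht
    have htp : t - p ≠ 0 := sub_ne_zero.mpr ht
    rw [TT, hsum t, hT1def]
    field_simp
  have hA2 : ∀ᶠ t in nhdsWithin p {p}ᶜ, eta1 t = -(TT t) * eta0 t := by
    filter_upwards [evP] with t hPt
    exact eta1_eq t hPt
  -- the induction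
  suffices H : ∀ n : ℕ, ∀ g : ℂ → ℂ,
      (∃ A, AnalyticAt ℂ A p ∧ ∀ᶠ t in nhdsWithin p {p}ᶜ, (t - p)^n * g t = A t) →
      ∃ c : ℂ, ∃ P Q : Polynomial ℂ, ∃ G : ℂ → ℂ, P.eval 0 = 0 ∧ AnalyticAt ℂ G p ∧
        ∀ᶠ t in nhdsWithin p {p}ᶜ, g t = comb c P Q t + G t by
    obtain ⟨n, hn⟩ := hf
    exact H n f ⟨_, hn, by filter_upwards with t; rw [smul_eq_mul]⟩
  intro n
  induction n with
  | zero =>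
    intro g ⟨A, hA, hev⟩
    refine ⟨0, 0, 0, A, by simp, hA, ?_⟩
    filter_upwards [hev] with t ht
    simp only [pow_zero, one_mul] at ht
    simp [comb, ht]
  | succ n IH =>
    intro g ⟨A, hA, hev⟩
    rcases Nat.even_or_odd' n with ⟨k, hk | hk⟩
    · -- n = 2k, so n+1 = 2k+1 odd
      rcases Nat.eq_zero_or_pos k with hk0 | hkpos
      · -- n+1 = 1 : use TT
        subst hk0
        simp only [Nat.mul_zero] at hk
        subst hk
        obtain ⟨c0, A2, hA2an, hev2⟩ := step_reduce hA hev hT1 (by rw [hT1p]; norm_num) (by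
          filter_upwards [hA1] with t ht; rw [pow_one]; exact ht)
        obtain ⟨c', P', Q', G, hP0, hG, hevG⟩ := IH (fun t => g t - c0 * TT t) ⟨A2, hA2an, hev2⟩
        refine ⟨c' + c0, P', Q', G, hP0, hG, ?_⟩
        filter_upwards [hevG] with t ht
        have : g t = (g t - c0 * TT t) + c0 * TT t := by ring
        rw [this, ht, comb, comb]
        ring
      · -- n+1 = 2(k-1)+3 : use eta1 * eta0^(k-1)
        obtain ⟨j, rfl⟩ : ∃ j, k = j + 1 := ⟨k - 1, (Nat.succ_pred_eq_of_pos hkpos).symm⟩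
        subst hk
        have hbB : ∀ᶠ t in nhdsWithin p {p}ᶜ,
            (t - p)^(2*(j+1)+1) * (eta1 t * (eta0 t)^j) = -(T1 t) * (H0 t)^(j+1) := by
          filter_upwards [hA0, hA1, hA2] with t h0 h1 h2
          rw [← h1, ← h0, mul_pow, ← pow_mul, h2, pow_succ (t - p) (2*(j+1)),
            pow_succ (eta0 t) j]
          ring
        obtain ⟨c0, A2, hA2an, hev2⟩ := step_reduce hA hev
          ((hT1.neg).mul (hH0.pow (j+1)))
          (by
            have : -(T1 p) * (H0 p)^(j+1) ≠ 0 := by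
              rw [hT1p, hH0p]
              exact mul_ne_zero (by norm_num) (pow_ne_zero _ (by norm_num))
            exact this)
          hbB
        obtain ⟨c', P', Q', G, hP0, hG, hevG⟩ :=
          IH (fun t => g t - c0 * (eta1 t * (eta0 t)^j)) ⟨A2, hA2an, hev2⟩
        refine ⟨c', P', Q' + Polynomial.C c0 * Polynomial.X^j, G, hP0, hG, ?_⟩
        filter_upwards [hevG] with t ht
        have : g t = (g t - c0 * (eta1 t * (eta0 t)^j)) + c0 * (eta1 t * (eta0 t)^j) := by ring
        rw [this, ht, comb, comb]
        simp only [Polynomial.eval_add, Polynomial.eval_mul, Polynomial.eval_pow,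
          Polynomial.eval_C, Polynomial.eval_X]
        ring
    · -- n = 2k+1, so n+1 = 2k+2 even : use eta0^(k+1)
      subst hk
      have hbB : ∀ᶠ t in nhdsWithin p {p}ᶜ,
          (t - p)^(2*k+1+1) * (eta0 t)^(k+1) = (H0 t)^(k+1) := by
        filter_upwards [hA0] with t h0
        rw [← h0, mul_pow, ← pow_mul]
        have he : 2*k+1+1 = 2*(k+1) := by ring
        rw [he]
      obtain ⟨c0, A2, hA2an, hev2⟩ := step_reduce hA hev (hH0.pow (k+1))
        (by
        have : (H0 p)^(k+1) ≠ 0 := by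
          rw [hH0p]; exact pow_ne_zero _ (by norm_num)
        exact this) hbB
      obtain ⟨c', P', Q', G, hP0, hG, hevG⟩ :=
        IH (fun t => g t - c0 * (eta0 t)^(k+1)) ⟨A2, hA2an, hev2⟩
      refine ⟨c', P' + Polynomial.C c0 * Polynomial.X^(k+1), Q', G, ?_, hG, ?_⟩
      · simp [hP0]
      · filter_upwards [hevG] with t ht
        have : g t = (g t - c0 * (eta0 t)^(k+1)) + c0 * (eta0 t)^(k+1) := by ring
        rw [this, ht, comb, comb]
        simp only [Polynomial.eval_add, Polynomial.eval_mul, Polynomial.eval_pow,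
          Polynomial.eval_C, Polynomial.eval_X]
        ring
lemma comb_per (c : ℂ) (P Q : Polynomial ℂ) (t : ℂ) :
    comb c P Q (t + 2 * Real.pi * Complex.I) = comb c P Q t := by
  rw [comb, comb, eta0_per, eta1_per, TT_per]

lemma per_int {u : ℂ → ℂ} (hu : ∀ t ∉ polesS, u (t + 2 * Real.pi * Complex.I) = u t) :
    ∀ k : ℤ, ∀ t ∉ polesS, u (t + 2 * Real.pi * Complex.I * k) = u t := by
  have hshift : ∀ (k : ℤ) (t : ℂ), t + 2 * Real.pi * Complex.I * k ∈ polesS ↔ t ∈ polesS :=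
    fun k t => polesS_shift t _ (exp_int_shift k)
  intro k
  induction k using Int.induction_on with
  | zero => intro t ht; simp
  | succ n ih =>
    intro t ht
    have h1 : t + 2 * Real.pi * Complex.I * ((n : ℤ) + 1 : ℤ)
        = (t + 2 * Real.pi * Complex.I * (n : ℤ)) + 2 * Real.pi * Complex.I := by
      push_cast; ring
    have hmem : t + 2 * Real.pi * Complex.I * ((n : ℤ) : ℤ) ∉ polesS :=
      fun h => ht ((hshift _ t).mp h)
    rw [h1, hu _ hmem, ih t ht]
  | pred n ih =>
    intro t ht
    have hmem : t + 2 * Real.pi * Complex.I * (-(n : ℤ) - 1 : ℤ) ∉ polesS :=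
      fun h => ht ((hshift _ t).mp h)
    have h1 : (t + 2 * Real.pi * Complex.I * (-(n : ℤ) - 1 : ℤ)) + 2 * Real.pi * Complex.I
        = t + 2 * Real.pi * Complex.I * (-(n : ℤ) : ℤ) := by push_cast; ring
    have h2 := hu _ hmem
    rw [h1, ih t ht] at h2
    exact h2.symm
noncomputable def red (t : ℂ) : ℂ :=
  t - 2 * Real.pi * Complex.I * (⌊t.im / (2 * Real.pi)⌋ : ℤ)

lemma coe_int_shift (k : ℤ) :
    2 * (Real.pi : ℂ) * Complex.I * (k : ℂ) = ((2 * Real.pi * k : ℝ) : ℂ) * Complex.I := by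
  push_cast; ring

lemma red_im (t : ℂ) : (red t).im = t.im - 2 * Real.pi * (⌊t.im / (2 * Real.pi)⌋ : ℝ) := by
  rw [red, coe_int_shift]
  simp

lemma red_im_nonneg (t : ℂ) : 0 ≤ (red t).im := by
  rw [red_im]
  have h1 : (⌊t.im / (2 * Real.pi)⌋ : ℝ) ≤ t.im / (2 * Real.pi) := Int.floor_le _
  have h2 : (0:ℝ) < 2 * Real.pi := by positivity
  have h3 : (⌊t.im / (2 * Real.pi)⌋ : ℝ) * (2 * Real.pi) ≤ t.im := by
    rw [← le_div_iff₀ h2]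
    exact h1
  nlinarith

lemma red_im_lt (t : ℂ) : (red t).im < 2 * Real.pi := by
  rw [red_im]
  have h1 : t.im / (2 * Real.pi) < ⌊t.im / (2 * Real.pi)⌋ + 1 := Int.lt_floor_add_one _
  have h2 : (0:ℝ) < 2 * Real.pi := by positivity
  nlinarith [(div_lt_iff₀ h2).mp h1]

lemma red_eq_shift (t : ℂ) : ∃ k : ℤ, red t = t + 2 * Real.pi * Complex.I * (k : ℂ) := by
  refine ⟨-⌊t.im / (2 * Real.pi)⌋, ?_⟩
  rw [red]
  push_cast
  ring

lemma red_idem (t : ℂ) : red (red t) = red t := by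
  have h0 : ⌊(red t).im / (2 * Real.pi)⌋ = 0 := by
    rw [Int.floor_eq_zero_iff]
    constructor
    · exact div_nonneg (red_im_nonneg t) (by positivity)
    · rw [div_lt_one (by positivity : (0:ℝ) < 2 * Real.pi)]
      exact red_im_lt t
  rw [red, h0]  -- second red
  simp

lemma red_mem_polesS (t : ℂ) : red t ∈ polesS ↔ t ∈ polesS := by
  obtain ⟨k, hk⟩ := red_eq_shift t
  rw [hk]
  exact polesS_shift t _ (exp_int_shift k)

lemma red_of_pole {t : ℂ} (k : ℤ) (hk : t = (Real.pi : ℂ) * (2 * k + 1) * Complex.I) :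
    red t = (Real.pi : ℂ) * Complex.I := by
  have him : t.im = Real.pi * (2 * k + 1) := by
    rw [hk]
    have : (Real.pi : ℂ) * (2 * (k : ℂ) + 1) * Complex.I
        = ((Real.pi * (2 * k + 1) : ℝ) : ℂ) * Complex.I := by push_cast; ring
    rw [this]
    simp
  have hfloor : ⌊t.im / (2 * Real.pi)⌋ = k := by
    rw [him]
    have hpi : Real.pi ≠ 0 := Real.pi_ne_zero
    have : Real.pi * (2 * k + 1) / (2 * Real.pi) = 1/2 + k := by
      field_simp
      ring
    rw [this, Int.floor_add_intCast]
    norm_num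
  rw [red, hfloor, hk]
  push_cast
  ring
lemma comb_diffAt (c : ℂ) (P Q : Polynomial ℂ) {t : ℂ} (h : exp t ≠ -1) :
    DifferentiableAt ℂ (comb c P Q) t := by
  have hc : cosh (t/2) ≠ 0 := cosh_half_ne t h
  have hcd : DifferentiableAt ℂ (fun s : ℂ => cosh (s/2)) t :=
    Complex.differentiable_cosh.differentiableAt.comp t (differentiableAt_id.div_const 2)
  have hsd : DifferentiableAt ℂ (fun s : ℂ => sinh (s/2)) t :=
    Complex.differentiable_sinh.differentiableAt.comp t (differentiableAt_id.div_const 2)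
  have heta0 : DifferentiableAt ℂ eta0 t := by
    have : DifferentiableAt ℂ (fun s : ℂ => 1 / cosh (s/2)^2) t :=
      (differentiableAt_const 1).div (hcd.pow 2) (pow_ne_zero 2 hc)
    exact this
  have heta1 : DifferentiableAt ℂ eta1 t := by
    have : DifferentiableAt ℂ (fun s : ℂ => -sinh (s/2) / cosh (s/2)^3) t :=
      (hsd.neg).div (hcd.pow 3) (pow_ne_zero 3 hc)
    exact this
  have hTT : DifferentiableAt ℂ TT t := by
    have : DifferentiableAt ℂ (fun s : ℂ => (exp s - 1) / (exp s + 1)) t :=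
      (Complex.differentiable_exp.differentiableAt.sub_const 1).div
        (Complex.differentiable_exp.differentiableAt.add_const 1) (exp_add_one_ne t h)
    exact this
  have hP : DifferentiableAt ℂ (fun s => P.eval (eta0 s)) t :=
    (P.differentiableAt).comp t heta0
  have hQ : DifferentiableAt ℂ (fun s => Q.eval (eta0 s)) t :=
    (Q.differentiableAt).comp t heta0
  have : DifferentiableAt ℂ
      (fun s => c * TT s + P.eval (eta0 s) + eta1 s * Q.eval (eta0 s)) t :=
    (((differentiableAt_const c).mul hTT).add hP).add (heta1.mul hQ)
  exact this

open Filter in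
lemma re_tendsto_top : Tendsto Complex.re (comap Complex.re atTop) atTop := tendsto_comap

open Filter in
lemma ev_re_top : ∀ᶠ t : ℂ in comap Complex.re atTop, 1 ≤ t.re := by
  rw [Filter.eventually_comap]
  filter_upwards [Filter.eventually_ge_atTop (1:ℝ)] with x hx t ht
  rw [ht]; exact hx

open Filter in
lemma ev_re_bot : ∀ᶠ t : ℂ in comap Complex.re atBot, t.re ≤ -1 := by
  rw [Filter.eventually_comap]
  filter_upwards [Filter.eventually_le_atBot (-1:ℝ)] with x hx t ht
  rw [ht]; exact hx

open Filter in
lemma ev_ne_top : ∀ᶠ t : ℂ in comap Complex.re atTop, exp t ≠ -1 := by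
  filter_upwards [ev_re_top] with t ht hexp
  have := polesS_re ((mem_polesS_iff t).mpr hexp)
  linarith

open Filter in
lemma ev_ne_bot : ∀ᶠ t : ℂ in comap Complex.re atBot, exp t ≠ -1 := by
  filter_upwards [ev_re_bot] with t ht hexp
  have := polesS_re ((mem_polesS_iff t).mpr hexp)
  linarith

open Filter in
lemma tendsto_exp_neg_top : Tendsto (fun t : ℂ => exp (-t)) (comap Complex.re atTop) (nhds 0) := by
  rw [tendsto_zero_iff_norm_tendsto_zero]
  have h1 : (fun t : ℂ => ‖exp (-t)‖) = fun t : ℂ => Real.exp (-t.re) := by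
    funext t
    rw [Complex.norm_exp]
    simp
  rw [h1]
  exact (Real.tendsto_exp_atBot).comp (tendsto_neg_atBot_iff.mpr re_tendsto_top)

open Filter in
lemma tendsto_exp_bot : Tendsto (fun t : ℂ => exp t) (comap Complex.re atBot) (nhds 0) := by
  rw [tendsto_zero_iff_norm_tendsto_zero]
  have h1 : (fun t : ℂ => ‖exp t‖) = fun t : ℂ => Real.exp t.re := by
    funext t
    rw [Complex.norm_exp]
  rw [h1]
  exact (Real.tendsto_exp_atBot).comp tendsto_comap
open Filter in
lemma tendsto_TT_top : Tendsto TT (comap Complex.re atTop) (nhds 1) := by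
  have hphi : ContinuousAt (fun w : ℂ => (1 - w) / (1 + w)) 0 :=
    ContinuousAt.div (by fun_prop) (by fun_prop) (by norm_num)
  have h0 : Tendsto (fun w : ℂ => (1 - w) / (1 + w)) (nhds 0) (nhds 1) := by
    have := hphi.tendsto
    norm_num at this
    exact this
  refine (h0.comp tendsto_exp_neg_top).congr' ?_
  filter_upwards [ev_ne_top] with t ht
  have hE : exp t ≠ 0 := Complex.exp_ne_zero t
  have h1 : exp t + 1 ≠ 0 := exp_add_one_ne t ht
  have h2 : (1 : ℂ) + exp (-t) ≠ 0 := by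
    rw [Complex.exp_neg]
    intro hc
    apply h1
    have : exp t * (1 + (exp t)⁻¹) = exp t + 1 := by field_simp
    rw [← this, hc, mul_zero]
  simp only [Function.comp]
  rw [TT, div_eq_div_iff h2 h1, Complex.exp_neg]
  field_simp
  try ring

open Filter in
lemma tendsto_eta0_top : Tendsto eta0 (comap Complex.re atTop) (nhds 0) := by
  have hphi : ContinuousAt (fun w : ℂ => 4 * w / (1 + w)^2) 0 :=
    ContinuousAt.div (by fun_prop) (by fun_prop) (by norm_num)
  have h0 : Tendsto (fun w : ℂ => 4 * w / (1 + w)^2) (nhds 0) (nhds 0) := by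
    have := hphi.tendsto
    norm_num at this
    exact this
  refine (h0.comp tendsto_exp_neg_top).congr' ?_
  filter_upwards [ev_ne_top] with t ht
  have hE : exp t ≠ 0 := Complex.exp_ne_zero t
  have h1 : exp t + 1 ≠ 0 := exp_add_one_ne t ht
  have h2 : (1 : ℂ) + exp (-t) ≠ 0 := by
    rw [Complex.exp_neg]
    intro hc
    apply h1
    have : exp t * (1 + (exp t)⁻¹) = exp t + 1 := by field_simp
    rw [← this, hc, mul_zero]
  simp only [Function.comp]
  rw [eta0_eq t ht, div_eq_div_iff (pow_ne_zero 2 h2) (pow_ne_zero 2 h1), Complex.exp_neg]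
  field_simp
  try ring

open Filter in
lemma tendsto_eta1_top : Tendsto eta1 (comap Complex.re atTop) (nhds 0) := by
  have h := (tendsto_TT_top.neg).mul tendsto_eta0_top
  norm_num at h
  refine h.congr' ?_
  filter_upwards [ev_ne_top] with t ht
  rw [eta1_eq t ht]
  ring

open Filter in
lemma tendsto_TT_bot : Tendsto TT (comap Complex.re atBot) (nhds (-1)) := by
  have hphi : ContinuousAt (fun w : ℂ => (w - 1) / (w + 1)) 0 :=
    ContinuousAt.div (by fun_prop) (by fun_prop) (by norm_num)
  have h0 : Tendsto (fun w : ℂ => (w - 1) / (w + 1)) (nhds 0) (nhds (-1)) := by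
    have := hphi.tendsto
    norm_num at this
    exact this
  exact h0.comp tendsto_exp_bot

open Filter in
lemma tendsto_eta0_bot : Tendsto eta0 (comap Complex.re atBot) (nhds 0) := by
  have hphi : ContinuousAt (fun w : ℂ => 4 * w / (w + 1)^2) 0 :=
    ContinuousAt.div (by fun_prop) (by fun_prop) (by norm_num)
  have h0 : Tendsto (fun w : ℂ => 4 * w / (w + 1)^2) (nhds 0) (nhds 0) := by
    have := hphi.tendsto
    norm_num at this
    exact this
  refine (h0.comp tendsto_exp_bot).congr' ?_
  filter_upwards [ev_ne_bot] with t ht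
  simp only [Function.comp]
  exact (eta0_eq t ht).symm

open Filter in
lemma tendsto_eta1_bot : Tendsto eta1 (comap Complex.re atBot) (nhds 0) := by
  have h := (tendsto_TT_bot.neg).mul tendsto_eta0_bot
  norm_num at h
  refine h.congr' ?_
  filter_upwards [ev_ne_bot] with t ht
  rw [eta1_eq t ht]
  ring

open Filter in
lemma tendsto_comb_top (c : ℂ) (P Q : Polynomial ℂ) (hP0 : P.eval 0 = 0) :
    Tendsto (comb c P Q) (comap Complex.re atTop) (nhds c) := by
  have hP : Tendsto (fun t => P.eval (eta0 t)) (comap Complex.re atTop) (nhds (P.eval 0)) :=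
    (P.continuous.continuousAt.tendsto).comp tendsto_eta0_top
  have hQ : Tendsto (fun t => Q.eval (eta0 t)) (comap Complex.re atTop) (nhds (Q.eval 0)) :=
    (Q.continuous.continuousAt.tendsto).comp tendsto_eta0_top
  have h : Tendsto (fun t => c * TT t + P.eval (eta0 t) + eta1 t * Q.eval (eta0 t))
      (comap Complex.re atTop) (nhds (c * 1 + P.eval 0 + 0 * Q.eval 0)) :=
    ((tendsto_const_nhds.mul tendsto_TT_top).add hP).add (tendsto_eta1_top.mul hQ)
  have h2 : c * 1 + P.eval 0 + 0 * Q.eval 0 = c := by rw [hP0]; ring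
  rw [h2] at h
  exact h

open Filter in
lemma tendsto_comb_bot (c : ℂ) (P Q : Polynomial ℂ) (hP0 : P.eval 0 = 0) :
    Tendsto (comb c P Q) (comap Complex.re atBot) (nhds (-c)) := by
  have hP : Tendsto (fun t => P.eval (eta0 t)) (comap Complex.re atBot) (nhds (P.eval 0)) :=
    (P.continuous.continuousAt.tendsto).comp tendsto_eta0_bot
  have hQ : Tendsto (fun t => Q.eval (eta0 t)) (comap Complex.re atBot) (nhds (Q.eval 0)) :=
    (Q.continuous.continuousAt.tendsto).comp tendsto_eta0_bot
  have h : Tendsto (fun t => c * TT t + P.eval (eta0 t) + eta1 t * Q.eval (eta0 t))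
      (comap Complex.re atBot) (nhds (c * (-1) + P.eval 0 + 0 * Q.eval 0)) :=
    ((tendsto_const_nhds.mul tendsto_TT_bot).add hP).add (tendsto_eta1_bot.mul hQ)
  have h2 : c * (-1) + P.eval 0 + 0 * Q.eval 0 = -c := by rw [hP0]; ring
  rw [h2] at h
  exact h

open Filter in
/-- Any `2πi`-periodic function, holomorphic on `ℂ` away from `{iπ(2k+1)}`, meromorphic
at those points, and tending to `0` as `Re t → ±∞`, is a polynomial without constant term
in the base functions `η₀` and `η₁`, i.e. `f = P(η₀) + η₁·Q(η₀)` with `P(0) = 0`. -/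
theorem stmt_11 (f : ℂ → ℂ)
    (hol : DifferentiableOn ℂ f polesSᶜ)
    (mero : ∀ t ∈ polesS, MeromorphicAt f t)
    (per : ∀ t ∉ polesS, f (t + 2 * (Real.pi : ℂ) * Complex.I) = f t)
    (hlim_top : Filter.Tendsto f (Filter.comap Complex.re Filter.atTop) (nhds 0))
    (hlim_bot : Filter.Tendsto f (Filter.comap Complex.re Filter.atBot) (nhds 0)) :
    ∃ P Q : Polynomial ℂ, P.eval 0 = 0 ∧
      ∀ t ∉ polesS, f t = P.eval (eta0 t) + eta1 t * Q.eval (eta0 t) := by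
  classical
  have hp_mem : (Real.pi : ℂ) * Complex.I ∈ polesS := ⟨0, by push_cast; ring⟩
  obtain ⟨c, P, Q, G, hP0, hG, hev⟩ := local_struct f (mero _ hp_mem)
  set g : ℂ → ℂ := fun t => f t - comb c P Q t with hgdef
  have hg_per : ∀ k : ℤ, ∀ t ∉ polesS, g (t + 2 * Real.pi * Complex.I * k) = g t := by
    apply per_int
    intro t ht
    simp only [hgdef]
    rw [per t ht, comb_per]
  have hg_diff : ∀ t ∉ polesS, DifferentiableAt ℂ g t := by
    intro t ht
    have h1 : DifferentiableAt ℂ f t :=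
      (hol t ht).differentiableAt (isClosed_polesS.isOpen_compl.mem_nhds ht)
    exact h1.sub (comb_diffAt c P Q (fun hexp => ht ((mem_polesS_iff t).mpr hexp)))
  set G' : ℂ → ℂ := Function.update g ((Real.pi : ℂ) * Complex.I)
    (G ((Real.pi : ℂ) * Complex.I)) with hG'def
  have hG'_ev : G' =ᶠ[nhds ((Real.pi : ℂ) * Complex.I)] G := by
    have h2 : ∀ᶠ z in nhdsWithin ((Real.pi : ℂ) * Complex.I) {((Real.pi : ℂ) * Complex.I)}ᶜ,
        G' z = G z := by
      filter_upwards [hev, self_mem_nhdsWithin] with z hz hne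
      rw [hG'def, Function.update_of_ne hne]
      simp only [hgdef]
      rw [hz]; ring
    have h3 : ∀ᶠ z in pure ((Real.pi : ℂ) * Complex.I), G' z = G z := by
      rw [Filter.eventually_pure, hG'def, Function.update_self]
    have h4 := Filter.eventually_sup.mpr ⟨h2, h3⟩
    rwa [nhdsNE_sup_pure] at h4
  have hG'_diff : DifferentiableAt ℂ G' ((Real.pi : ℂ) * Complex.I) :=
    hG'_ev.differentiableAt_iff.mpr hG.differentiableAt
  set F : ℂ → ℂ := fun t => G' (red t) with hFdef
  have hF_eq : ∀ t ∉ polesS, F t = g t := by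
    intro t ht
    obtain ⟨k, hk⟩ := red_eq_shift t
    have h1 : red t ∉ polesS := fun h => ht ((red_mem_polesS t).mp h)
    have h2 : red t ≠ (Real.pi : ℂ) * Complex.I := fun h => h1 (by rw [h]; exact hp_mem)
    simp only [hFdef]
    rw [hG'def, Function.update_of_ne h2, hk]
    exact hg_per k t ht
  have hF_red : ∀ t, F t = F (red t) := by
    intro t
    simp only [hFdef, red_idem]
  have hF_diff : Differentiable ℂ F := by
    intro t₀
    by_cases ht₀ : t₀ ∈ polesS
    · obtain ⟨k, hk⟩ := ht₀
      have him : t₀.im = Real.pi * (2 * k + 1) := by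
        rw [hk]
        have he : (Real.pi : ℂ) * (2 * (k : ℂ) + 1) * Complex.I
            = ((Real.pi * (2 * k + 1) : ℝ) : ℂ) * Complex.I := by push_cast; ring
        rw [he]
        simp
      have hU : ∀ᶠ t in nhds t₀, F t = G' (t - 2 * Real.pi * Complex.I * k) := by
        have hopen : IsOpen {t : ℂ | 2 * Real.pi * k < t.im ∧ t.im < 2 * Real.pi * (k + 1)} :=
          (isOpen_Ioo.preimage Complex.continuous_im)
        have hmem : t₀ ∈ {t : ℂ | 2 * Real.pi * k < t.im ∧ t.im < 2 * Real.pi * (k + 1)} := by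
          simp only [Set.mem_setOf_eq, him]
          constructor <;> nlinarith [Real.pi_pos]
        filter_upwards [hopen.mem_nhds hmem] with t ht
        obtain ⟨h1, h2⟩ := ht
        have hfloor : ⌊t.im / (2 * Real.pi)⌋ = k := by
          rw [Int.floor_eq_iff]
          constructor
          · rw [le_div_iff₀ (by positivity : (0:ℝ) < 2 * Real.pi)]
            linarith
          · rw [div_lt_iff₀ (by positivity : (0:ℝ) < 2 * Real.pi)]
            push_cast
            nlinarith
        simp only [hFdef, red, hfloor]
      have hshift : t₀ - 2 * Real.pi * Complex.I * k = (Real.pi : ℂ) * Complex.I := by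
        rw [hk]; push_cast; ring
      have hG'd2 : DifferentiableAt ℂ G' (t₀ - 2 * Real.pi * Complex.I * k) := by
        rw [hshift]; exact hG'_diff
      have hcomp : DifferentiableAt ℂ (fun t => G' (t - 2 * Real.pi * Complex.I * k)) t₀ :=
        hG'd2.comp t₀ (differentiableAt_id.sub_const _)
      exact (Filter.EventuallyEq.differentiableAt_iff hU).mpr hcomp
    · have hev2 : ∀ᶠ t in nhds t₀, F t = g t := by
        filter_upwards [isClosed_polesS.isOpen_compl.mem_nhds ht₀] with s hs
        exact hF_eq s hs
      exact (Filter.EventuallyEq.differentiableAt_iff hev2).mpr (hg_diff t₀ ht₀)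
  -- limits of F
  have hF_top : Tendsto F (comap Complex.re atTop) (nhds (-c)) := by
    have h1 : Tendsto (fun t => f t - comb c P Q t) (comap Complex.re atTop) (nhds (0 - c)) :=
      hlim_top.sub (tendsto_comb_top c P Q hP0)
    rw [zero_sub] at h1
    refine Filter.Tendsto.congr' ?_ h1
    filter_upwards [ev_re_top] with t ht
    have htp : t ∉ polesS := fun h => by have := polesS_re h; linarith
    exact (hF_eq t htp).symm
  have hF_bot : Tendsto F (comap Complex.re atBot) (nhds c) := by
    have h1 : Tendsto (fun t => f t - comb c P Q t) (comap Complex.re atBot) (nhds (0 - (-c))) :=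
      hlim_bot.sub (tendsto_comb_bot c P Q hP0)
    rw [zero_sub, neg_neg] at h1
    refine Filter.Tendsto.congr' ?_ h1
    filter_upwards [ev_re_bot] with t ht
    have htp : t ∉ polesS := fun h => by have := polesS_re h; linarith
    exact (hF_eq t htp).symm
  -- bounds from the limits
  have hext : ∀ (l : Filter ℝ) (L : ℂ), Tendsto F (comap Complex.re l) (nhds L) →
      ∀ᶠ x : ℝ in l, ∀ t : ℂ, t.re = x → ‖F t‖ ≤ ‖L‖ + 1 := by
    intro l L hT
    have h2 : ∀ᶠ x in nhds L, ‖x‖ ≤ ‖L‖ + 1 := by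
      filter_upwards [Metric.closedBall_mem_nhds L one_pos] with x hx
      have h3 : dist x L ≤ 1 := Metric.mem_closedBall.mp hx
      have h4 := norm_sub_norm_le x L
      rw [← dist_eq_norm] at h4
      linarith
    have h5 := hT.eventually h2
    rwa [Filter.eventually_comap] at h5
  obtain ⟨s1, hs1⟩ : ∃ s1 : ℝ, ∀ t : ℂ, s1 ≤ t.re → ‖F t‖ ≤ ‖-c‖ + 1 := by
    obtain ⟨a, ha⟩ := Filter.eventually_atTop.mp (hext atTop (-c) hF_top)
    exact ⟨a, fun t ht => ha t.re ht t rfl⟩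
  obtain ⟨s2, hs2⟩ : ∃ s2 : ℝ, ∀ t : ℂ, t.re ≤ s2 → ‖F t‖ ≤ ‖c‖ + 1 := by
    obtain ⟨a, ha⟩ := Filter.eventually_atBot.mp (hext atBot c hF_bot)
    exact ⟨a, fun t ht => ha t.re ht t rfl⟩
  -- compact bound
  set K : Set ℂ := Complex.re ⁻¹' (Set.Icc s2 s1) ∩ Complex.im ⁻¹' (Set.Icc 0 (2 * Real.pi))
    with hKdef
  have hKclosed : IsClosed K :=
    (isClosed_Icc.preimage Complex.continuous_re).inter
      (isClosed_Icc.preimage Complex.continuous_im)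
  have hKsub : K ⊆ Metric.closedBall 0 (|s1| + |s2| + 2 * Real.pi) := by
    rintro t ⟨⟨h1, h2⟩, ⟨h3, h4⟩⟩
    rw [Metric.mem_closedBall, Complex.dist_eq, sub_zero]
    calc ‖t‖ ≤ |t.re| + |t.im| := Complex.norm_le_abs_re_add_abs_im t
      _ ≤ (|s1| + |s2|) + 2 * Real.pi := by
          apply add_le_add
          · rcases abs_cases t.re with ⟨he, _⟩ | ⟨he, _⟩ <;> rw [he]
            · calc t.re ≤ s1 := h2
                _ ≤ |s1| := le_abs_self s1
                _ ≤ |s1| + |s2| := le_add_of_nonneg_right (abs_nonneg s2)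
            · calc -t.re ≤ -s2 := by linarith
                _ ≤ |s2| := neg_le_abs s2
                _ ≤ |s1| + |s2| := le_add_of_nonneg_left (abs_nonneg s1)
          · rw [_root_.abs_of_nonneg h3]; exact h4
  have hKcompact : IsCompact K :=
    (isCompact_closedBall (0:ℂ) (|s1| + |s2| + 2 * Real.pi)).of_isClosed_subset hKclosed hKsub
  obtain ⟨M, hM⟩ := hKcompact.exists_bound_of_continuousOn hF_diff.continuous.continuousOn
  -- global bound
  have hbound : ∀ t, ‖F t‖ ≤ max M (max (‖-c‖ + 1) (‖c‖ + 1)) := by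
    intro t
    rw [hF_red t]
    have him1 := red_im_nonneg t
    have him2 := red_im_lt t
    rcases le_or_gt s1 (red t).re with h | h
    · exact le_trans (hs1 (red t) h) (le_trans (le_max_left _ _) (le_max_right M _))
    rcases le_or_gt (red t).re s2 with h' | h'
    · exact le_trans (hs2 (red t) h') (le_trans (le_max_right _ _) (le_max_right M _))
    · have hsK : red t ∈ K := ⟨⟨h'.le, h.le⟩, ⟨him1, him2.le⟩⟩
      exact le_trans (hM (red t) hsK) (le_max_left _ _)
  have hBded : Bornology.IsBounded (Set.range F) := by
    rw [isBounded_iff_forall_norm_le]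
    exact ⟨_, by rintro x ⟨t, rfl⟩; exact hbound t⟩
  have hconst : ∀ z w, F z = F w := hF_diff.apply_eq_apply_of_bounded hBded
  have hFconst : F = fun _ => F 0 := funext fun z => hconst z 0
  haveI hne_top : (Filter.comap Complex.re Filter.atTop).NeBot := by
    rw [Filter.comap_neBot_iff]
    intro s hs
    obtain ⟨a, ha⟩ := Filter.mem_atTop_sets.mp hs
    exact ⟨(a : ℂ), by simpa using ha a le_rfl⟩
  haveI hne_bot : (Filter.comap Complex.re Filter.atBot).NeBot := by
    rw [Filter.comap_neBot_iff]
    intro s hs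
    obtain ⟨a, ha⟩ := Filter.mem_atBot_sets.mp hs
    exact ⟨(a : ℂ), by simpa using ha a le_rfl⟩
  have h1 : F 0 = -c := by
    have h2 : Tendsto F (comap Complex.re atTop) (nhds (F 0)) := by
      rw [hFconst]; exact tendsto_const_nhds
    exact tendsto_nhds_unique h2 hF_top
  have h2 : F 0 = c := by
    have h3 : Tendsto F (comap Complex.re atBot) (nhds (F 0)) := by
      rw [hFconst]; exact tendsto_const_nhds
    exact tendsto_nhds_unique h3 hF_bot
  have hc0 : c = 0 := by
    have h3 := h1.symm.trans h2
    linear_combination (-1/2 : ℂ) * h3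
  have hF0 : F 0 = 0 := by rw [h2, hc0]
  refine ⟨P, Q, hP0, ?_⟩
  intro t ht
  have h4 : F t = 0 := by rw [hFconst]; exact hF0
  have h5 := hF_eq t ht
  rw [h4] at h5
  have h6 : f t = comb c P Q t := by
    have h7 := h5.symm
    simp only [hgdef] at h7
    exact eq_of_sub_eq_zero h7
  rw [h6, comb, hc0]
  ring
end

section
/- Let U ⊆ ℝ² be open and let F, F̃ : (−δ₀,δ₀) × U → ℝ² be analytic families of the close-to-identity form F_δ = id + δG_δ and F̃_δ = id + δG̃_δ, each area-preserving: det D_zF_δ ≡ 1 and det D_zF̃_δ ≡ 1 on U for all δ. Suppose the Taylor coefficients in δ at δ = 0 agree up to order n: ∂_δ^ℓ F(0,z) = ∂_δ^ℓ F̃(0,z) for all z ∈ U and all 0 ≤ ℓ ≤ n. Then the planar vector field v(z) := ∂_δ^{n+1}(F − F̃)(0,z) is divergence-free: ∂v₁/∂x + ∂v₂/∂y = 0 on U. -/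
/-- Determinant of a linear map of the plane. -/
noncomputable def det2 (L : (ℝ × ℝ) →L[ℝ] ℝ × ℝ) : ℝ :=
  (L (1, 0)).1 * (L (0, 1)).2 - (L (1, 0)).2 * (L (0, 1)).1

open Filter Topology
open scoped ContDiff

section Helpers

variable {W : Type*} [NormedAddCommGroup W] [NormedSpace ℝ W]

theorem itd_congr (n : ℕ) : ∀ {f g : ℝ → W} {x : ℝ}, f =ᶠ[nhds x] g →
    iteratedDeriv n f x = iteratedDeriv n g x := by
  induction n with
  | zero => intro f g x h; simpa using h.self_of_nhds
  | succ n ih =>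
    intro f g x h
    rw [iteratedDeriv_succ, iteratedDeriv_succ]
    exact Filter.EventuallyEq.deriv_eq (h.eventuallyEq_nhds.mono fun y hy => ih hy)

theorem contDiffOn_iteratedDeriv {s : Set ℝ} (hs : IsOpen s) {f : ℝ → W}
    (hf : ContDiffOn ℝ ω f s) : ∀ m : ℕ, ContDiffOn ℝ ω (iteratedDeriv m f) s
  | 0 => by simpa [iteratedDeriv_zero] using hf
  | m + 1 => by
    rw [iteratedDeriv_succ]
    have h : ContDiffOn ℝ ω (fun x => fderiv ℝ (iteratedDeriv m f) x 1) s :=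
      ((contDiffOn_iteratedDeriv hs hf m).fderiv_of_isOpen hs le_top).clm_apply contDiffOn_const
    exact h.congr fun x _ => (fderiv_apply_one_eq_deriv).symm

theorem hasDerivAt_iteratedDeriv {s : Set ℝ} (hs : IsOpen s) {f : ℝ → W}
    (hf : ContDiffOn ℝ ω f s) (m : ℕ) {x : ℝ} (hx : x ∈ s) :
    HasDerivAt (iteratedDeriv m f) (iteratedDeriv (m + 1) f x) x := by
  have hd : DifferentiableAt ℝ (iteratedDeriv m f) x :=
    ((contDiffOn_iteratedDeriv hs hf m).contDiffAt (hs.mem_nhds hx)).differentiableAt (by simp)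
  rw [iteratedDeriv_succ]
  exact hd.hasDerivAt

theorem itd_sub {s : Set ℝ} (hs : IsOpen s) (n : ℕ) (f g : ℝ → W)
    (hf : ContDiffOn ℝ ω f s) (hg : ContDiffOn ℝ ω g s) :
    ∀ x ∈ s, iteratedDeriv n (fun y => f y - g y) x
      = iteratedDeriv n f x - iteratedDeriv n g x := by
  induction n with
  | zero => intro x _; simp
  | succ n ih =>
    intro x hx
    rw [iteratedDeriv_succ]
    have ev : iteratedDeriv n (fun y => f y - g y) =ᶠ[nhds x]
        fun y => iteratedDeriv n f y - iteratedDeriv n g y :=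
      eventually_of_mem (hs.mem_nhds hx) (fun y hy => ih y hy)
    rw [ev.deriv_eq]
    exact ((hasDerivAt_iteratedDeriv hs hf n hx).sub (hasDerivAt_iteratedDeriv hs hg n hx)).deriv

theorem itd_const_one (n : ℕ) (x : ℝ) : iteratedDeriv (n + 1) (fun _ : ℝ => (1:ℝ)) x = 0 := by
  rw [iteratedDeriv_succ']
  simp only [deriv_const']
  induction n with
  | zero => simp
  | succ n ih => rw [iteratedDeriv_succ']; simpa using ih

end Helpers

section Leibniz

theorem pascal_sum (n : ℕ) (A B : ℕ → ℝ) :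
    ∑ i ∈ Finset.range (n + 1), (n.choose i : ℝ) *
        (A (i+1) * B (n-i) + A i * B (n-i+1))
      = ∑ i ∈ Finset.range (n + 2), ((n+1).choose i : ℝ) * (A i * B (n+1-i)) := by
  have hR : ∑ i ∈ Finset.range (n + 2), ((n+1).choose i : ℝ) * (A i * B (n+1-i))
      = (∑ i ∈ Finset.range (n + 1), ((n+1).choose (i+1) : ℝ) * (A (i+1) * B (n-i)))
        + A 0 * B (n+1) := by
    rw [Finset.sum_range_succ' (fun i => ((n+1).choose i : ℝ) * (A i * B (n+1-i))) (n+1)]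
    simp [Nat.succ_sub_succ]
  rw [hR]
  have hsplit : ∀ i ∈ Finset.range (n+1), (n.choose i : ℝ) *
        (A (i+1) * B (n-i) + A i * B (n-i+1))
      = (n.choose i : ℝ) * (A (i+1) * B (n-i)) + (n.choose i : ℝ) * (A i * B (n-i+1)) := by
    intro i _; ring
  rw [Finset.sum_congr rfl hsplit, Finset.sum_add_distrib]
  have hpas : ∀ i ∈ Finset.range (n+1), ((n+1).choose (i+1) : ℝ) * (A (i+1) * B (n-i))
      = (n.choose i : ℝ) * (A (i+1) * B (n-i)) + (n.choose (i+1) : ℝ) * (A (i+1) * B (n-i)) := by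
    intro i _
    rw [Nat.choose_succ_succ]
    push_cast; ring
  rw [Finset.sum_congr rfl hpas, Finset.sum_add_distrib]
  have key : ∑ i ∈ Finset.range (n+1), (n.choose i : ℝ) * (A i * B (n-i+1))
      = (∑ i ∈ Finset.range (n+1), (n.choose (i+1) : ℝ) * (A (i+1) * B (n-i))) + A 0 * B (n+1) := by
    rw [Finset.sum_range_succ' (fun i => (n.choose i : ℝ) * (A i * B (n-i+1))) n]
    rw [Finset.sum_range_succ (fun i => (n.choose (i+1) : ℝ) * (A (i+1) * B (n-i))) n]
    simp only [Nat.choose_succ_self, Nat.cast_zero, zero_mul, add_zero, Nat.choose_zero_right,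
      Nat.cast_one, one_mul, Nat.sub_zero]
    congr 1
    apply Finset.sum_congr rfl
    intro i hi
    have h2 : n - (i+1) + 1 = n - i := by
      have := Finset.mem_range.mp hi; omega
    rw [h2]
  rw [key]; ring

end Leibniz

theorem itd_mul {s : Set ℝ} (hs : IsOpen s) (n : ℕ) (f g : ℝ → ℝ)
    (hf : ContDiffOn ℝ ω f s) (hg : ContDiffOn ℝ ω g s) :
    ∀ x ∈ s, iteratedDeriv n (fun y => f y * g y) x
      = ∑ i ∈ Finset.range (n + 1), (n.choose i : ℝ) *
          (iteratedDeriv i f x * iteratedDeriv (n - i) g x) := by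
  induction n with
  | zero => intro x _; simp
  | succ n ih =>
    intro x hx
    rw [iteratedDeriv_succ]
    have ev : iteratedDeriv n (fun y => f y * g y) =ᶠ[nhds x]
        fun y => ∑ i ∈ Finset.range (n + 1), (n.choose i : ℝ) *
          (iteratedDeriv i f y * iteratedDeriv (n - i) g y) :=
      eventually_of_mem (hs.mem_nhds hx) (fun y hy => ih y hy)
    rw [ev.deriv_eq]
    have hterm : ∀ i ∈ Finset.range (n + 1),
        HasDerivAt (fun y => (n.choose i : ℝ) *
            (iteratedDeriv i f y * iteratedDeriv (n - i) g y))
          ((n.choose i : ℝ) * (iteratedDeriv (i+1) f x * iteratedDeriv (n-i) g x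
            + iteratedDeriv i f x * iteratedDeriv (n-i+1) g x)) x := by
      intro i _
      have h1 := hasDerivAt_iteratedDeriv hs hf i hx
      have h2 := hasDerivAt_iteratedDeriv hs hg (n - i) hx
      have := (h1.mul h2).const_mul ((n.choose i : ℝ))
      exact this
    have hsum := HasDerivAt.fun_sum hterm
    rw [hsum.deriv, pascal_sum n (fun i => iteratedDeriv i f x) (fun i => iteratedDeriv i g x)]

section DIter

variable {W : Type*} [NormedAddCommGroup W] [NormedSpace ℝ W]

/-- Iterated directional derivative in the first (`δ`) direction. -/
noncomputable def dIter (Φ : ℝ × (ℝ × ℝ) → W) : ℕ → ℝ × (ℝ × ℝ) → W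
  | 0 => Φ
  | k + 1 => fun q => fderiv ℝ (dIter Φ k) q (1, 0)

variable {S : Set (ℝ × (ℝ × ℝ))} {Φ : ℝ × (ℝ × ℝ) → W}

theorem dIter_contDiffOn (hS : IsOpen S) (hΦ : ContDiffOn ℝ ω Φ S) :
    ∀ k, ContDiffOn ℝ ω (dIter Φ k) S
  | 0 => hΦ
  | k + 1 => ((dIter_contDiffOn hS hΦ k).fderiv_of_isOpen hS le_top).clm_apply contDiffOn_const

theorem dIter_differentiableAt (hS : IsOpen S) (hΦ : ContDiffOn ℝ ω Φ S) (k : ℕ)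
    {q : ℝ × (ℝ × ℝ)} (hq : q ∈ S) : DifferentiableAt ℝ (dIter Φ k) q :=
  ((dIter_contDiffOn hS hΦ k).contDiffAt (hS.mem_nhds hq)).differentiableAt
    (by simp)

theorem hasDerivAt_dIter_slice (hS : IsOpen S) (hΦ : ContDiffOn ℝ ω Φ S) (k : ℕ)
    {δ : ℝ} {z : ℝ × ℝ} (hq : (δ, z) ∈ S) :
    HasDerivAt (fun t => dIter Φ k (t, z)) (dIter Φ (k + 1) (δ, z)) δ := by
  have hd := dIter_differentiableAt hS hΦ k hq
  have h1 : HasDerivAt (fun t : ℝ => (t, z)) ((1 : ℝ), (0 : ℝ × ℝ)) δ :=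
    (hasDerivAt_id δ).prodMk (hasDerivAt_const δ z)
  exact (hd.hasFDerivAt.comp_hasDerivAt δ h1)

theorem itd_slice (hS : IsOpen S) (hΦ : ContDiffOn ℝ ω Φ S) (k : ℕ)
    {δ : ℝ} {z : ℝ × ℝ} (hq : (δ, z) ∈ S) :
    iteratedDeriv k (fun t => Φ (t, z)) δ = dIter Φ k (δ, z) := by
  induction k generalizing δ with
  | zero => simp [dIter, iteratedDeriv_zero]
  | succ k ih =>
    rw [iteratedDeriv_succ]
    have hopen : IsOpen {t : ℝ | (t, z) ∈ S} := hS.preimage (by fun_prop)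
    have ev : iteratedDeriv k (fun t => Φ (t, z)) =ᶠ[nhds δ] fun t => dIter Φ k (t, z) :=
      eventually_of_mem (hopen.mem_nhds hq) (fun t ht => ih ht)
    rw [ev.deriv_eq]
    exact (hasDerivAt_dIter_slice hS hΦ k hq).deriv

theorem fderiv_apply_const {g : ℝ × (ℝ × ℝ) → W} {q : ℝ × (ℝ × ℝ)}
    (hg : DifferentiableAt ℝ (fderiv ℝ g) q) (v w : ℝ × (ℝ × ℝ)) :
    fderiv ℝ (fun p => fderiv ℝ g p v) q w = fderiv ℝ (fderiv ℝ g) q w v := by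
  have h1 : HasFDerivAt (fun p => fderiv ℝ g p v)
      ((ContinuousLinearMap.apply ℝ W v).comp (fderiv ℝ (fderiv ℝ g) q)) q :=
    (ContinuousLinearMap.apply ℝ W v).hasFDerivAt.comp q hg.hasFDerivAt
  rw [h1.fderiv]; rfl

theorem dIter_swap (hS : IsOpen S) (hΦ : ContDiffOn ℝ ω Φ S) (u : ℝ × ℝ) (k : ℕ) :
    ∀ q ∈ S, dIter (fun p => fderiv ℝ Φ p (0, u)) k q = fderiv ℝ (dIter Φ k) q (0, u) := by
  induction k with
  | zero => intro q _; rfl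
  | succ k ih =>
    intro q hq
    have ev : dIter (fun p => fderiv ℝ Φ p (0, u)) k =ᶠ[nhds q]
        fun p => fderiv ℝ (dIter Φ k) p (0, u) :=
      eventually_of_mem (hS.mem_nhds hq) (fun p hp => ih p hp)
    show fderiv ℝ (dIter (fun p => fderiv ℝ Φ p (0, u)) k) q (1, 0) = _
    rw [ev.fderiv_eq]
    have hdd : DifferentiableAt ℝ (fderiv ℝ (dIter Φ k)) q :=
      (((dIter_contDiffOn hS hΦ k).fderiv_of_isOpen (m := ω) hS le_top).contDiffAt
        (hS.mem_nhds hq)).differentiableAt (by simp)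
    rw [fderiv_apply_const hdd]
    have hsym : fderiv ℝ (fderiv ℝ (dIter Φ k)) q (1, 0) (0, u)
        = fderiv ℝ (fderiv ℝ (dIter Φ k)) q (0, u) (1, 0) := by
      apply second_derivative_symmetric_of_eventually (f := dIter Φ k)
      · exact eventually_of_mem (hS.mem_nhds hq)
          (fun p hp => (dIter_differentiableAt hS hΦ k hp).hasFDerivAt)
      · exact hdd.hasFDerivAt
    rw [hsym]
    show _ = fderiv ℝ (fun p => fderiv ℝ (dIter Φ k) p (1, 0)) q (0, u)
    rw [fderiv_apply_const hdd]

end DIter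

section Slice

variable {W : Type*} [NormedAddCommGroup W] [NormedSpace ℝ W]

theorem hasFDerivAt_incl (δ : ℝ) (z : ℝ × ℝ) :
    HasFDerivAt (fun w : ℝ × ℝ => ((δ : ℝ), w))
      ((0 : (ℝ × ℝ) →L[ℝ] ℝ).prod (ContinuousLinearMap.id ℝ (ℝ × ℝ))) z :=
  (hasFDerivAt_const δ z).prodMk (hasFDerivAt_id z)

theorem fderiv_slice {Ψ : ℝ × (ℝ × ℝ) → W} {δ : ℝ} {z : ℝ × ℝ}
    (h : DifferentiableAt ℝ Ψ (δ, z)) (u : ℝ × ℝ) :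
    fderiv ℝ (fun w => Ψ (δ, w)) z u = fderiv ℝ Ψ (δ, z) (0, u) := by
  have h2 : HasFDerivAt (fun w => Ψ (δ, w))
      ((fderiv ℝ Ψ (δ, z)).comp
        ((0 : (ℝ × ℝ) →L[ℝ] ℝ).prod (ContinuousLinearMap.id ℝ (ℝ × ℝ)))) z :=
    h.hasFDerivAt.comp z (hasFDerivAt_incl δ z)
  rw [h2.fderiv]; rfl

theorem fderiv_slice_pi {Ψ : ℝ × (ℝ × ℝ) → ℝ × ℝ} (π : (ℝ × ℝ) →L[ℝ] ℝ) {δ : ℝ} {z : ℝ × ℝ}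
    (h : DifferentiableAt ℝ Ψ (δ, z)) (u : ℝ × ℝ) :
    fderiv ℝ (fun w => π (Ψ (δ, w))) z u = π (fderiv ℝ Ψ (δ, z) (0, u)) := by
  have h2 : HasFDerivAt (fun w => Ψ (δ, w))
      ((fderiv ℝ Ψ (δ, z)).comp
        ((0 : (ℝ × ℝ) →L[ℝ] ℝ).prod (ContinuousLinearMap.id ℝ (ℝ × ℝ)))) z :=
    h.hasFDerivAt.comp z (hasFDerivAt_incl δ z)
  have h3 : HasFDerivAt (fun w => π (Ψ (δ, w)))
      (π.comp ((fderiv ℝ Ψ (δ, z)).comp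
        ((0 : (ℝ × ℝ) →L[ℝ] ℝ).prod (ContinuousLinearMap.id ℝ (ℝ × ℝ))))) z :=
    π.hasFDerivAt.comp z h2
  rw [h3.fderiv]; rfl

theorem dIter_clm {S : Set (ℝ × (ℝ × ℝ))} (hS : IsOpen S) {Ψ : ℝ × (ℝ × ℝ) → ℝ × ℝ}
    (hΨ : ContDiffOn ℝ ω Ψ S) (π : (ℝ × ℝ) →L[ℝ] ℝ) (k : ℕ) :
    ∀ q ∈ S, dIter (fun p => π (Ψ p)) k q = π (dIter Ψ k q) := by
  induction k with
  | zero => intro q _; rfl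
  | succ k ih =>
    intro q hq
    have ev : dIter (fun p => π (Ψ p)) k =ᶠ[nhds q] fun p => π (dIter Ψ k p) :=
      eventually_of_mem (hS.mem_nhds hq) (fun p hp => ih p hp)
    show fderiv ℝ (dIter (fun p => π (Ψ p)) k) q (1, 0) = _
    rw [ev.fderiv_eq]
    have hd := dIter_differentiableAt hS hΨ k hq
    have h3 : HasFDerivAt (fun p => π (dIter Ψ k p)) (π.comp (fderiv ℝ (dIter Ψ k) q)) q :=
      π.hasFDerivAt.comp q hd.hasFDerivAt
    rw [h3.fderiv]; rfl

end Slice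

theorem area_sum (U : Set (ℝ × ℝ)) (hU : IsOpen U) (δ₀ : ℝ) (hδ₀ : 0 < δ₀)
    (F : ℝ → ℝ × ℝ → ℝ × ℝ)
    (hΦ : ContDiffOn ℝ ω (fun q : ℝ × (ℝ × ℝ) => F q.1 q.2)
      {q : ℝ × (ℝ × ℝ) | |q.1| < δ₀ ∧ q.2 ∈ U})
    (harea : ∀ δ : ℝ, |δ| < δ₀ → ∀ z ∈ U, det2 (fderiv ℝ (F δ) z) = 1)
    (n : ℕ) {z : ℝ × ℝ} (hz : z ∈ U) :
    ∑ i ∈ Finset.range (n + 2), ((n+1).choose i : ℝ) *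
      ((fderiv ℝ (dIter (fun q : ℝ × (ℝ × ℝ) => F q.1 q.2) i) (0, z) (0, (1, 0))).1
         * (fderiv ℝ (dIter (fun q : ℝ × (ℝ × ℝ) => F q.1 q.2) (n+1-i)) (0, z) (0, (0, 1))).2
       - (fderiv ℝ (dIter (fun q : ℝ × (ℝ × ℝ) => F q.1 q.2) i) (0, z) (0, (1, 0))).2
         * (fderiv ℝ (dIter (fun q : ℝ × (ℝ × ℝ) => F q.1 q.2) (n+1-i)) (0, z) (0, (0, 1))).1)
      = 0 := by
  set S : Set (ℝ × (ℝ × ℝ)) := {q : ℝ × (ℝ × ℝ) | |q.1| < δ₀ ∧ q.2 ∈ U} with hSdef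
  have hS : IsOpen S := by
    apply IsOpen.inter
    · exact isOpen_Iio.preimage (continuous_abs.comp continuous_fst)
    · exact hU.preimage continuous_snd
  set Φ : ℝ × (ℝ × ℝ) → ℝ × ℝ := fun q => F q.1 q.2 with hΦdef
  set I : Set ℝ := {t : ℝ | |t| < δ₀} with hIdef
  have hI : IsOpen I := isOpen_Iio.preimage continuous_abs
  have h0I : (0 : ℝ) ∈ I := by simp [hIdef, hδ₀]
  have hmem : ∀ t ∈ I, (t, z) ∈ S := fun t ht => ⟨ht, hz⟩
  have hK : ∀ u : ℝ × ℝ, ContDiffOn ℝ ω (fun p => fderiv ℝ Φ p (0, u)) S :=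
    fun u => (hΦ.fderiv_of_isOpen hS le_top).clm_apply contDiffOn_const
  -- slice identity
  have claimA : ∀ (π : (ℝ × ℝ) →L[ℝ] ℝ) (u : ℝ × ℝ), ∀ t ∈ I,
      π (fderiv ℝ (F t) z u) = π (fderiv ℝ Φ (t, z) (0, u)) := by
    intro π u t ht
    have hd : DifferentiableAt ℝ Φ (t, z) :=
      (hΦ.contDiffAt (hS.mem_nhds (hmem t ht))).differentiableAt
        (by simp)
    exact congrArg π (fderiv_slice hd u)
  -- smoothness of the scalar slice functions
  have hsm : ∀ (π : (ℝ × ℝ) →L[ℝ] ℝ) (u : ℝ × ℝ),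
      ContDiffOn ℝ ω (fun t => π (fderiv ℝ (F t) z u)) I := by
    intro π u
    have hbase : ContDiffOn ℝ ω (fun t => π (fderiv ℝ Φ (t, z) (0, u))) I := by
      have h1 : ContDiffOn ℝ ω (fun p => π (fderiv ℝ Φ p (0, u))) S :=
        (hK u).continuousLinearMap_comp π
      have h2 : ContDiffOn ℝ ω (fun t : ℝ => (t, z)) I :=
        (contDiff_id.prodMk contDiff_const).contDiffOn
      exact h1.comp h2 (fun t ht => hmem t ht)
    exact hbase.congr (fun t ht => claimA π u t ht)
  -- iterated derivative of the scalar slice functions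
  have claimC : ∀ (π : (ℝ × ℝ) →L[ℝ] ℝ) (u : ℝ × ℝ) (i : ℕ),
      iteratedDeriv i (fun t => π (fderiv ℝ (F t) z u)) 0
        = π (fderiv ℝ (dIter Φ i) (0, z) (0, u)) := by
    intro π u i
    have e1 : iteratedDeriv i (fun t => π (fderiv ℝ (F t) z u)) 0
        = iteratedDeriv i (fun t => π (fderiv ℝ Φ (t, z) (0, u))) 0 :=
      itd_congr i (eventually_of_mem (hI.mem_nhds h0I) (fun t ht => claimA π u t ht))
    have e2 : iteratedDeriv i (fun t => π (fderiv ℝ Φ (t, z) (0, u))) 0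
        = dIter (fun p => π (fderiv ℝ Φ p (0, u))) i (0, z) :=
      itd_slice hS ((hK u).continuousLinearMap_comp π) i (hmem 0 h0I)
    have e3 : dIter (fun p => π (fderiv ℝ Φ p (0, u))) i (0, z)
        = π (dIter (fun p => fderiv ℝ Φ p (0, u)) i (0, z)) :=
      dIter_clm hS (hK u) π i (0, z) (hmem 0 h0I)
    have e4 : π (dIter (fun p => fderiv ℝ Φ p (0, u)) i (0, z))
        = π (fderiv ℝ (dIter Φ i) (0, z) (0, u)) :=
      congrArg π (dIter_swap hS hΦ u i (0, z) (hmem 0 h0I))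
    exact ((e1.trans e2).trans e3).trans e4
  set π₁ : (ℝ × ℝ) →L[ℝ] ℝ := ContinuousLinearMap.fst ℝ ℝ ℝ with hπ₁
  set π₂ : (ℝ × ℝ) →L[ℝ] ℝ := ContinuousLinearMap.snd ℝ ℝ ℝ with hπ₂
  set a1 : ℝ → ℝ := fun t => π₁ (fderiv ℝ (F t) z (1, 0)) with ha1
  set a2 : ℝ → ℝ := fun t => π₂ (fderiv ℝ (F t) z (1, 0)) with ha2
  set b1 : ℝ → ℝ := fun t => π₁ (fderiv ℝ (F t) z (0, 1)) with hb1
  set b2 : ℝ → ℝ := fun t => π₂ (fderiv ℝ (F t) z (0, 1)) with hb2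
  have h0 : iteratedDeriv (n+1) (fun t => det2 (fderiv ℝ (F t) z)) 0 = 0 := by
    have hev : (fun t : ℝ => det2 (fderiv ℝ (F t) z)) =ᶠ[nhds 0] fun _ => (1:ℝ) :=
      eventually_of_mem (hI.mem_nhds h0I) (fun t ht => harea t ht z hz)
    exact (itd_congr _ hev).trans (itd_const_one n 0)
  have hsub : iteratedDeriv (n+1) (fun t => det2 (fderiv ℝ (F t) z)) 0
      = iteratedDeriv (n+1) (fun t => a1 t * b2 t) 0
        - iteratedDeriv (n+1) (fun t => a2 t * b1 t) 0 :=
    itd_sub hI (n+1) (fun t => a1 t * b2 t) (fun t => a2 t * b1 t)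
      ((hsm π₁ (1,0)).mul (hsm π₂ (0,1))) ((hsm π₂ (1,0)).mul (hsm π₁ (0,1))) 0 h0I
  have hm1 : iteratedDeriv (n+1) (fun t => a1 t * b2 t) 0
      = ∑ i ∈ Finset.range (n + 2), ((n+1).choose i : ℝ) *
          (π₁ (fderiv ℝ (dIter Φ i) (0, z) (0, (1, 0)))
            * π₂ (fderiv ℝ (dIter Φ (n+1-i)) (0, z) (0, (0, 1)))) := by
    rw [itd_mul hI (n+1) a1 b2 (hsm π₁ (1,0)) (hsm π₂ (0,1)) 0 h0I]
    exact Finset.sum_congr rfl fun i _ => by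
      rw [claimC π₁ (1,0) i, claimC π₂ (0,1) (n+1-i)]
  have hm2 : iteratedDeriv (n+1) (fun t => a2 t * b1 t) 0
      = ∑ i ∈ Finset.range (n + 2), ((n+1).choose i : ℝ) *
          (π₂ (fderiv ℝ (dIter Φ i) (0, z) (0, (1, 0)))
            * π₁ (fderiv ℝ (dIter Φ (n+1-i)) (0, z) (0, (0, 1)))) := by
    rw [itd_mul hI (n+1) a2 b1 (hsm π₂ (1,0)) (hsm π₁ (0,1)) 0 h0I]
    exact Finset.sum_congr rfl fun i _ => by
      rw [claimC π₂ (1,0) i, claimC π₁ (0,1) (n+1-i)]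
  have hfin : ∑ i ∈ Finset.range (n + 2), (((n+1).choose i : ℝ) *
          (π₁ (fderiv ℝ (dIter Φ i) (0, z) (0, (1, 0)))
            * π₂ (fderiv ℝ (dIter Φ (n+1-i)) (0, z) (0, (0, 1))))
        - ((n+1).choose i : ℝ) *
          (π₂ (fderiv ℝ (dIter Φ i) (0, z) (0, (1, 0)))
            * π₁ (fderiv ℝ (dIter Φ (n+1-i)) (0, z) (0, (0, 1))))) = 0 := by
    rw [Finset.sum_sub_distrib, ← hm1, ← hm2, ← hsub, h0]
  calc ∑ i ∈ Finset.range (n + 2), ((n+1).choose i : ℝ) *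
      ((fderiv ℝ (dIter Φ i) (0, z) (0, (1, 0))).1
         * (fderiv ℝ (dIter Φ (n+1-i)) (0, z) (0, (0, 1))).2
       - (fderiv ℝ (dIter Φ i) (0, z) (0, (1, 0))).2
         * (fderiv ℝ (dIter Φ (n+1-i)) (0, z) (0, (0, 1))).1)
      = ∑ i ∈ Finset.range (n + 2), (((n+1).choose i : ℝ) *
          (π₁ (fderiv ℝ (dIter Φ i) (0, z) (0, (1, 0)))
            * π₂ (fderiv ℝ (dIter Φ (n+1-i)) (0, z) (0, (0, 1))))
        - ((n+1).choose i : ℝ) *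
          (π₂ (fderiv ℝ (dIter Φ i) (0, z) (0, (1, 0)))
            * π₁ (fderiv ℝ (dIter Φ (n+1-i)) (0, z) (0, (0, 1))))) :=
      Finset.sum_congr rfl fun i _ => by rw [mul_sub]; rfl
    _ = 0 := hfin

theorem hasFDerivAt_slice_pi {Ψ : ℝ × (ℝ × ℝ) → ℝ × ℝ} (π : (ℝ × ℝ) →L[ℝ] ℝ) {δ : ℝ}
    {z : ℝ × ℝ} (h : DifferentiableAt ℝ Ψ (δ, z)) :
    HasFDerivAt (fun w => π (Ψ (δ, w)))
      (π.comp ((fderiv ℝ Ψ (δ, z)).comp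
        ((0 : (ℝ × ℝ) →L[ℝ] ℝ).prod (ContinuousLinearMap.id ℝ (ℝ × ℝ))))) z :=
  π.hasFDerivAt.comp z (h.hasFDerivAt.comp z (hasFDerivAt_incl δ z))

/-- If two close-to-identity analytic families of area-preserving planar maps have
Taylor expansions in `δ` that agree up to order `n`, then the coefficient of order
`n+1` of their difference is a divergence-free vector field. -/
theorem stmt_12 (U : Set (ℝ × ℝ)) (hU : IsOpen U) (δ₀ : ℝ) (hδ₀ : 0 < δ₀)
    (F F' : ℝ → ℝ × ℝ → ℝ × ℝ)
    (hanalF : AnalyticOnNhd ℝ (fun q : ℝ × (ℝ × ℝ) => F q.1 q.2)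
      {q : ℝ × (ℝ × ℝ) | |q.1| < δ₀ ∧ q.2 ∈ U})
    (hanalF' : AnalyticOnNhd ℝ (fun q : ℝ × (ℝ × ℝ) => F' q.1 q.2)
      {q : ℝ × (ℝ × ℝ) | |q.1| < δ₀ ∧ q.2 ∈ U})
    (hidF : ∀ z ∈ U, F 0 z = z) (hidF' : ∀ z ∈ U, F' 0 z = z)
    (hareaF : ∀ δ : ℝ, |δ| < δ₀ → ∀ z ∈ U, det2 (fderiv ℝ (F δ) z) = 1)
    (hareaF' : ∀ δ : ℝ, |δ| < δ₀ → ∀ z ∈ U, det2 (fderiv ℝ (F' δ) z) = 1)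
    (n : ℕ)
    (hagree : ∀ ℓ : ℕ, ℓ ≤ n → ∀ z ∈ U,
      iteratedDeriv ℓ (fun δ => F δ z) 0 = iteratedDeriv ℓ (fun δ => F' δ z) 0)
    (v : ℝ × ℝ → ℝ × ℝ)
    (hv : ∀ z, v z = iteratedDeriv (n + 1) (fun δ => F δ z - F' δ z) 0) :
    ∀ z ∈ U,
      fderiv ℝ (fun w => (v w).1) z (1, 0) + fderiv ℝ (fun w => (v w).2) z (0, 1) = 0 := by
  intro z hz
  set S : Set (ℝ × (ℝ × ℝ)) := {q : ℝ × (ℝ × ℝ) | |q.1| < δ₀ ∧ q.2 ∈ U} with hSdef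
  have hS : IsOpen S := by
    apply IsOpen.inter
    · exact isOpen_Iio.preimage (continuous_abs.comp continuous_fst)
    · exact hU.preimage continuous_snd
  set Φ : ℝ × (ℝ × ℝ) → ℝ × ℝ := fun q => F q.1 q.2 with hΦdef
  set Φ' : ℝ × (ℝ × ℝ) → ℝ × ℝ := fun q => F' q.1 q.2 with hΦ'def
  have hΦ : ContDiffOn ℝ ω Φ S := hanalF.contDiffOn_of_completeSpace
  have hΦ' : ContDiffOn ℝ ω Φ' S := hanalF'.contDiffOn_of_completeSpace
  set I : Set ℝ := {t : ℝ | |t| < δ₀} with hIdef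
  have hI : IsOpen I := isOpen_Iio.preimage continuous_abs
  have h0I : (0 : ℝ) ∈ I := by simp [hIdef, hδ₀]
  have hmem : ∀ w ∈ U, ∀ t ∈ I, ((t : ℝ), w) ∈ S := fun w hw t ht => ⟨ht, hw⟩
  -- slices of dIter coincide with iterated derivatives in δ
  have hslice : ∀ i : ℕ, ∀ w ∈ U,
      iteratedDeriv i (fun δ => F δ w) 0 = dIter Φ i (0, w) :=
    fun i w hw => itd_slice hS hΦ i (hmem w hw 0 h0I)
  have hslice' : ∀ i : ℕ, ∀ w ∈ U,
      iteratedDeriv i (fun δ => F' δ w) 0 = dIter Φ' i (0, w) :=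
    fun i w hw => itd_slice hS hΦ' i (hmem w hw 0 h0I)
  -- agreement of spatial derivatives up to order n
  have hAgree : ∀ i : ℕ, i ≤ n → ∀ u : ℝ × ℝ,
      fderiv ℝ (dIter Φ i) (0, z) (0, u) = fderiv ℝ (dIter Φ' i) (0, z) (0, u) := by
    intro i hi u
    have hd : DifferentiableAt ℝ (dIter Φ i) (0, z) :=
      dIter_differentiableAt hS hΦ i (hmem z hz 0 h0I)
    have hd' : DifferentiableAt ℝ (dIter Φ' i) (0, z) :=
      dIter_differentiableAt hS hΦ' i (hmem z hz 0 h0I)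
    have ev : (fun w => dIter Φ i (0, w)) =ᶠ[nhds z] fun w => dIter Φ' i (0, w) :=
      eventually_of_mem (hU.mem_nhds hz) (fun w hw => by
        show dIter Φ i (0, w) = dIter Φ' i (0, w)
        rw [← hslice i w hw, ← hslice' i w hw]; exact hagree i hi w hw)
    rw [← fderiv_slice hd u, ← fderiv_slice hd' u, ev.fderiv_eq]
  -- order-zero values: the identity
  have hA0 : ∀ u : ℝ × ℝ, fderiv ℝ (dIter Φ 0) (0, z) (0, u) = u := by
    intro u
    have hd : DifferentiableAt ℝ Φ (0, z) :=
      (hΦ.contDiffAt (hS.mem_nhds (hmem z hz 0 h0I))).differentiableAt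
        (by simp)
    have h1 := fderiv_slice (Ψ := Φ) hd u
    have ev : (fun w => Φ ((0:ℝ), w)) =ᶠ[nhds z] (id : ℝ × ℝ → ℝ × ℝ) :=
      eventually_of_mem (hU.mem_nhds hz) (fun w hw => hidF w hw)
    show (fderiv ℝ Φ ((0:ℝ), z)) ((0:ℝ), u) = u
    rw [← h1, ev.fderiv_eq, fderiv_id]
    rfl
  have hA0' : ∀ u : ℝ × ℝ, fderiv ℝ (dIter Φ' 0) (0, z) (0, u) = u := by
    intro u
    have hd : DifferentiableAt ℝ Φ' (0, z) :=
      (hΦ'.contDiffAt (hS.mem_nhds (hmem z hz 0 h0I))).differentiableAt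
        (by simp)
    have h1 := fderiv_slice (Ψ := Φ') hd u
    have ev : (fun w => Φ' ((0:ℝ), w)) =ᶠ[nhds z] (id : ℝ × ℝ → ℝ × ℝ) :=
      eventually_of_mem (hU.mem_nhds hz) (fun w hw => hidF' w hw)
    show (fderiv ℝ Φ' ((0:ℝ), z)) ((0:ℝ), u) = u
    rw [← h1, ev.fderiv_eq, fderiv_id]
    rfl
  -- the two area identities
  have hF := area_sum U hU δ₀ hδ₀ F hΦ hareaF n hz
  have hF' := area_sum U hU δ₀ hδ₀ F' hΦ' hareaF' n hz
  -- abbreviations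
  set A : ℕ → ℝ × ℝ → ℝ × ℝ := fun i u => fderiv ℝ (dIter Φ i) (0, z) (0, u) with hA
  set A' : ℕ → ℝ × ℝ → ℝ × ℝ := fun i u => fderiv ℝ (dIter Φ' i) (0, z) (0, u) with hA'
  set T : ℕ → ℝ := fun i => ((n+1).choose i : ℝ) *
      ((A i (1,0)).1 * (A (n+1-i) (0,1)).2 - (A i (1,0)).2 * (A (n+1-i) (0,1)).1) with hT
  set T' : ℕ → ℝ := fun i => ((n+1).choose i : ℝ) *
      ((A' i (1,0)).1 * (A' (n+1-i) (0,1)).2 - (A' i (1,0)).2 * (A' (n+1-i) (0,1)).1) with hT'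
  have hdiff : ∑ i ∈ Finset.range (n + 2), (T i - T' i) = 0 := by
    rw [Finset.sum_sub_distrib]
    rw [hT, hT']
    rw [hF, hF', sub_zero]
  rw [Finset.sum_range_succ, Finset.sum_range_succ'] at hdiff
  have hmid : ∀ i ∈ Finset.range n, T (i+1) - T' (i+1) = 0 := by
    intro i hi
    have h1 : i + 1 ≤ n := Nat.succ_le_of_lt (Finset.mem_range.mp hi)
    have h2 : n + 1 - (i+1) ≤ n := by omega
    rw [hT, hT']
    simp only [hA, hA']
    rw [hAgree (i+1) h1 (1,0), hAgree (n+1-(i+1)) h2 (0,1)]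
    ring
  rw [Finset.sum_congr rfl hmid, Finset.sum_const, smul_zero] at hdiff
  -- boundary values
  have hb0 : T 0 - T' 0 = (A (n+1) (0,1)).2 - (A' (n+1) (0,1)).2 := by
    rw [hT, hT']
    simp only [Nat.sub_zero, Nat.choose_zero_right, Nat.cast_one, one_mul]
    rw [show A 0 (1,0) = ((1:ℝ),(0:ℝ)) from hA0 (1,0), show A' 0 (1,0) = ((1:ℝ),(0:ℝ)) from hA0' (1,0)]
    norm_num
  have hbn : T (n+1) - T' (n+1) = (A (n+1) (1,0)).1 - (A' (n+1) (1,0)).1 := by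
    rw [hT, hT']
    simp only [Nat.sub_self, Nat.choose_self, Nat.cast_one, one_mul]
    rw [show A 0 (0,1) = ((0:ℝ),(1:ℝ)) from hA0 (0,1), show A' 0 (0,1) = ((0:ℝ),(1:ℝ)) from hA0' (0,1)]
    norm_num
  -- the divergence identity for the (n+1)-st coefficients
  have hkey : ((A (n+1) (1,0)).1 - (A' (n+1) (1,0)).1)
      + ((A (n+1) (0,1)).2 - (A' (n+1) (0,1)).2) = 0 := by
    rw [← hb0, ← hbn]
    linarith [hdiff]
  -- express the goal in terms of A, A'
  have hvdiff : ∀ (π : (ℝ × ℝ) →L[ℝ] ℝ) (u : ℝ × ℝ),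
      fderiv ℝ (fun w => π (v w)) z u = π (A (n+1) u) - π (A' (n+1) u) := by
    intro π u
    have hd : DifferentiableAt ℝ (dIter Φ (n+1)) (0, z) :=
      dIter_differentiableAt hS hΦ (n+1) (hmem z hz 0 h0I)
    have hd' : DifferentiableAt ℝ (dIter Φ' (n+1)) (0, z) :=
      dIter_differentiableAt hS hΦ' (n+1) (hmem z hz 0 h0I)
    have ev : (fun w => π (v w)) =ᶠ[nhds z]
        fun w => π (dIter Φ (n+1) (0, w)) - π (dIter Φ' (n+1) (0, w)) := by
      refine eventually_of_mem (hU.mem_nhds hz) (fun w hw => ?_)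
      show π (v w) = π (dIter Φ (n+1) (0, w)) - π (dIter Φ' (n+1) (0, w))
      have hsmF : ContDiffOn ℝ ω (fun δ => F δ w) I :=
        hΦ.comp ((contDiff_id.prodMk contDiff_const).contDiffOn) (fun t ht => hmem w hw t ht)
      have hsmF' : ContDiffOn ℝ ω (fun δ => F' δ w) I :=
        hΦ'.comp ((contDiff_id.prodMk contDiff_const).contDiffOn) (fun t ht => hmem w hw t ht)
      rw [hv w, itd_sub hI (n+1) (fun δ => F δ w) (fun δ => F' δ w) hsmF hsmF' 0 h0I,
        hslice (n+1) w hw, hslice' (n+1) w hw]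
      exact π.map_sub _ _
    rw [ev.fderiv_eq]
    have h1 := hasFDerivAt_slice_pi (Ψ := dIter Φ (n+1)) π hd
    have h2 := hasFDerivAt_slice_pi (Ψ := dIter Φ' (n+1)) π hd'
    rw [(h1.fun_sub h2).fderiv]
    rfl
  have g1 : fderiv ℝ (fun w => (v w).1) z (1, 0)
      = (A (n+1) (1,0)).1 - (A' (n+1) (1,0)).1 :=
    hvdiff (ContinuousLinearMap.fst ℝ ℝ ℝ) (1,0)
  have g2 : fderiv ℝ (fun w => (v w).2) z (0, 1)
      = (A (n+1) (0,1)).2 - (A' (n+1) (0,1)).2 :=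
    hvdiff (ContinuousLinearMap.snd ℝ ℝ ℝ) (0,1)
  rw [g1, g2]
  linarith [hkey]
end

section
/- (The homoclinic invariant as the derivative of the splitting function.) Let λ > 1, U ⊆ ℝ² open, E : U → ℝ continuously differentiable, and let ψ⁻, ψ⁺ : ℝ → U be differentiable curves such that for all t: E(ψ⁻(t)) = 0, ∂E/∂x(ψ⁻(t)) = −(log λ)·(dψ⁻₂/dt)(t), and ∂E/∂y(ψ⁻(t)) = (log λ)·(dψ⁻₁/dt)(t). Define Θ(T) := E(ψ⁺(T·log λ)). Suppose t₁, t₂ ∈ ℝ satisfy ψ⁺(t₁) = ψ⁻(t₂), and set T₁ := t₁/log λ. Then Θ′(T₁) = (log λ)²·( ψ̇⁻₁(t₂)·ψ̇⁺₂(t₁) − ψ̇⁻₂(t₂)·ψ̇⁺₁(t₁) ); that is, the homoclinic invariant ω := Ω(ψ̇⁺(t₁), ψ̇⁻(t₂)) (where Ω(u,v) := u₁v₂ − u₂v₁ is the standard area form) satisfies ω = −Θ′(T₁)/(log λ)², so up to sign the homoclinic invariant equals (log λ)^{−2} times the derivative of the splitting function at its zero. -/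
/-- **The homoclinic invariant as the derivative of the splitting function.**
If `E` vanishes on the unstable separatrix `ψ⁻` and `∇E(ψ⁻) = −(log λ)·J·ψ̇⁻`, then for
the splitting function `Θ(T) = E(ψ⁺(T log λ))` and a homoclinic point
`ψ⁺(t₁) = ψ⁻(t₂)`, `T₁ = t₁/log λ`, one has
`Θ′(T₁) = (log λ)²·(ψ̇⁻₁(t₂)ψ̇⁺₂(t₁) − ψ̇⁻₂(t₂)ψ̇⁺₁(t₁))`, and the homoclinic invariant
`ω = Ω(ψ̇⁺(t₁), ψ̇⁻(t₂))` equals `−Θ′(T₁)/(log λ)²`. -/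
theorem stmt_17 (lam : ℝ) (hlam : 1 < lam) (U : Set (ℝ × ℝ)) (hU : IsOpen U)
    (E : ℝ × ℝ → ℝ) (hE : ContDiffOn ℝ 1 E U)
    (ψm ψp : ℝ → ℝ × ℝ)
    (hψmU : ∀ t, ψm t ∈ U) (hψpU : ∀ t, ψp t ∈ U)
    (hψm : ∀ t, DifferentiableAt ℝ ψm t) (hψp : ∀ t, DifferentiableAt ℝ ψp t)
    (hE0 : ∀ t, E (ψm t) = 0)
    (hEx : ∀ t, fderiv ℝ E (ψm t) (1, 0) =
      -(Real.log lam) * deriv (fun s => (ψm s).2) t)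
    (hEy : ∀ t, fderiv ℝ E (ψm t) (0, 1) =
      Real.log lam * deriv (fun s => (ψm s).1) t)
    (t₁ t₂ : ℝ) (hhom : ψp t₁ = ψm t₂) :
    deriv (fun T => E (ψp (T * Real.log lam))) (t₁ / Real.log lam) =
      Real.log lam ^ 2 *
        (deriv (fun s => (ψm s).1) t₂ * deriv (fun s => (ψp s).2) t₁ -
         deriv (fun s => (ψm s).2) t₂ * deriv (fun s => (ψp s).1) t₁) ∧
    deriv (fun s => (ψp s).1) t₁ * deriv (fun s => (ψm s).2) t₂ -
      deriv (fun s => (ψp s).2) t₁ * deriv (fun s => (ψm s).1) t₂ =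
      -(deriv (fun T => E (ψp (T * Real.log lam))) (t₁ / Real.log lam)) /
        Real.log lam ^ 2 := by
  set L := Real.log lam with hLdef
  have hLpos : 0 < L := Real.log_pos hlam
  have hL : L ≠ 0 := ne_of_gt hLpos
  -- derivative of ψp and its components
  have hψp' : HasDerivAt ψp (deriv ψp t₁) t₁ := (hψp t₁).hasDerivAt
  set v : ℝ × ℝ := deriv ψp t₁ with hvdef
  have hv1' : HasDerivAt (fun s => (ψp s).1) v.1 t₁ :=
    ((ContinuousLinearMap.fst ℝ ℝ ℝ).hasFDerivAt.comp_hasDerivAt t₁ hψp')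
  have hv2' : HasDerivAt (fun s => (ψp s).2) v.2 t₁ :=
    ((ContinuousLinearMap.snd ℝ ℝ ℝ).hasFDerivAt.comp_hasDerivAt t₁ hψp')
  have hv1 : deriv (fun s => (ψp s).1) t₁ = v.1 := hv1'.deriv
  have hv2 : deriv (fun s => (ψp s).2) t₁ = v.2 := hv2'.deriv
  -- E is differentiable at the homoclinic point
  have hEdiff : DifferentiableAt ℝ E (ψp t₁) := by
    rw [hhom]
    exact ((hE.contDiffAt (hU.mem_nhds (hψmU t₂))).differentiableAt one_ne_zero)
  -- T₁ * L = t₁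
  have hT : t₁ / L * L = t₁ := div_mul_cancel₀ t₁ hL
  -- derivative of T ↦ ψp (T * L)
  have hg : HasDerivAt (fun T => ψp (T * L)) (L • v) (t₁ / L) := by
    have hlin : HasDerivAt (fun T : ℝ => T * L) L (t₁ / L) := by
      simpa using (hasDerivAt_id (t₁ / L)).mul_const L
    have h := HasDerivAt.scomp (x := t₁ / L) (by rw [hT]; exact hψp') hlin
    exact h
  -- derivative of Θ
  have hE' : HasFDerivAt E (fderiv ℝ E (ψp t₁)) (ψp (t₁ / L * L)) := by
    rw [hT]; exact hEdiff.hasFDerivAt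
  have hΘ : HasDerivAt (fun T => E (ψp (T * L)))
      (fderiv ℝ E (ψp t₁) (L • v)) (t₁ / L) :=
    hE'.comp_hasDerivAt (t₁ / L) hg
  -- compute fderiv applied to L • v
  have hval : fderiv ℝ E (ψp t₁) (L • v) =
      L ^ 2 * (deriv (fun s => (ψm s).1) t₂ * v.2 -
        deriv (fun s => (ψm s).2) t₂ * v.1) := by
    have hsplit : (L • v : ℝ × ℝ) = (L * v.1) • ((1 : ℝ), (0 : ℝ)) +
        (L * v.2) • ((0 : ℝ), (1 : ℝ)) := by
      simp [Prod.ext_iff, smul_eq_mul]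
    rw [hhom, hsplit, map_add, map_smul, map_smul, hEx t₂, hEy t₂]
    simp only [smul_eq_mul]
    ring
  have hΘval : deriv (fun T => E (ψp (T * L))) (t₁ / L) =
      L ^ 2 * (deriv (fun s => (ψm s).1) t₂ * v.2 -
        deriv (fun s => (ψm s).2) t₂ * v.1) := by
    rw [hΘ.deriv, hval]
  constructor
  · rw [hΘval, hv1, hv2]
  · rw [hΘval, hv1, hv2]
    field_simp
    ring
end
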